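/- arXiv:1703.09754 — 7 statements merged into one kernel-verified Lean document; each statement's English description precedes it below -/
import Mathlib

section
/- Let (X,d) be a compact metric space with a fixed reference probability measure m, and assume (X,d,m) is regular: every coupling γ between m and any ν ∈ P(X) achieving the infimum defining W₂(m,ν) is of the form γ = (Id,T)_# m for some measurable map T : X → X. Then for each μ ∈ P(X), the minimizer of the functional ν ↦ W₂(ν, m) over the set {ν ∈ P(X) : supp ν ⊆ b(μ)} is unique. -/
open MeasureTheory Filter

section Defs

variable {X : Type*} [MetricSpace X] [MeasurableSpace X]

/-- The set of metric barycenters of `μ`: the minimizers over `y ∈ X` of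
`y ↦ ∫ d(x,y)² dμ(x)`. -/
def bary (μ : ProbabilityMeasure X) : Set X :=
  {y : X | ∀ z : X,
    ∫ x, dist x y ^ 2 ∂(μ : Measure X) ≤ ∫ x, dist x z ^ 2 ∂(μ : Measure X)}

/-- `γ` is a coupling of `μ` and `ν`: a measure on `X × X` with marginals `μ` and `ν`. -/
def IsCoupling (γ : Measure (X × X)) (μ ν : ProbabilityMeasure X) : Prop :=
  γ.map Prod.fst = (μ : Measure X) ∧ γ.map Prod.snd = (ν : Measure X)

/-- The squared 2-Wasserstein distance `W₂(μ,ν)²`. -/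
noncomputable def W2sq (μ ν : ProbabilityMeasure X) : ℝ :=
  sInf {c : ℝ | ∃ γ : Measure (X × X), IsCoupling γ μ ν ∧
    c = ∫ p, dist p.1 p.2 ^ 2 ∂γ}

/-- The 2-Wasserstein distance `W₂(μ,ν)`. -/
noncomputable def W2 (μ ν : ProbabilityMeasure X) : ℝ := Real.sqrt (W2sq μ ν)

/-- The support of a probability measure: the set of points all of whose open
neighbourhoods have positive measure. -/
def mSupport (μ : ProbabilityMeasure X) : Set X :=
  {x : X | ∀ U : Set X, IsOpen U → x ∈ U → (μ : Measure X) U ≠ 0}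

/-- `(X,d,m)` is regular: every coupling between `m` and any `ν ∈ P(X)` achieving the
infimum defining `W₂(m,ν)` is of the form `(Id,T)_# m` for some measurable map `T`. -/
def Regular (m : ProbabilityMeasure X) : Prop :=
  ∀ ν : ProbabilityMeasure X, ∀ γ : Measure (X × X), IsCoupling γ m ν →
    (∫ p, dist p.1 p.2 ^ 2 ∂γ) = W2sq m ν →
    ∃ T : X → X, Measurable T ∧ γ = (m : Measure X).map (fun x => (x, T x))

/-- The variance of `μ`: the minimal value of `y ↦ ∫ d(x,y)² dμ(x)`. -/
noncomputable def mvar (μ : ProbabilityMeasure X) : ℝ :=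
  ⨅ y : X, ∫ x, dist x y ^ 2 ∂(μ : Measure X)

end Defs

section Aux

open BoundedContinuousFunction Set
open scoped NNReal ENNReal Topology

set_option linter.unusedSectionVars false

section RMK

variable {Y : Type*} [MetricSpace Y] [CompactSpace Y] [MeasurableSpace Y] [BorelSpace Y]

variable (u : Ultrafilter ℕ) (κ : ℕ → Measure Y)

/-- Ultrafilter limit of the integrals. -/
noncomputable def rmkL (f : Y →ᵇ ℝ≥0) : ℝ≥0∞ :=
  limUnder (u : Filter ℕ) (fun n => ∫⁻ y, (f y : ℝ≥0∞) ∂(κ n))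

lemma rmkL_tendsto (f : Y →ᵇ ℝ≥0) :
    Tendsto (fun n => ∫⁻ y, (f y : ℝ≥0∞) ∂(κ n)) (u : Filter ℕ) (𝓝 (rmkL u κ f)) := by
  apply tendsto_nhds_limUnder
  obtain ⟨x, -, hx⟩ := isCompact_univ.ultrafilter_le_nhds
    (u.map (fun n => ∫⁻ y, (f y : ℝ≥0∞) ∂(κ n))) (by simp)
  exact ⟨x, hx⟩

lemma rmkL_unique {f : Y →ᵇ ℝ≥0} {a : ℝ≥0∞}
    (h : Tendsto (fun n => ∫⁻ y, (f y : ℝ≥0∞) ∂(κ n)) (u : Filter ℕ) (𝓝 a)) :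
    rmkL u κ f = a :=
  tendsto_nhds_unique (rmkL_tendsto u κ f) h

lemma rmkL_const (hκ : ∀ n, (κ n) Set.univ = 1) (c : ℝ≥0) : rmkL u κ (BoundedContinuousFunction.const Y c) = c := by
  apply rmkL_unique
  have : (fun n => ∫⁻ y, ((BoundedContinuousFunction.const Y c) y : ℝ≥0∞) ∂(κ n))
      = fun _ => (c : ℝ≥0∞) := by
    funext n
    simp [lintegral_const, hκ n]
  rw [this]
  exact tendsto_const_nhds

lemma rmkL_mono {f g : Y →ᵇ ℝ≥0} (h : ∀ x, f x ≤ g x) : rmkL u κ f ≤ rmkL u κ g := by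
  refine le_of_tendsto_of_tendsto' (rmkL_tendsto u κ f) (rmkL_tendsto u κ g) (fun n => ?_)
  exact lintegral_mono fun y => ENNReal.coe_le_coe.2 (h y)

lemma rmkL_add (f g : Y →ᵇ ℝ≥0) : rmkL u κ (f + g) = rmkL u κ f + rmkL u κ g := by
  apply rmkL_unique
  have : (fun n => ∫⁻ y, ((f + g) y : ℝ≥0∞) ∂(κ n))
      = fun n => (∫⁻ y, (f y : ℝ≥0∞) ∂(κ n)) + ∫⁻ y, (g y : ℝ≥0∞) ∂(κ n) := by
    funext n
    rw [← lintegral_add_left (f.continuous.measurable.coe_nnreal_ennreal)]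
    simp [ENNReal.coe_add]
  rw [this]
  exact (rmkL_tendsto u κ f).add (rmkL_tendsto u κ g)

lemma rmkL_smul (c : ℝ≥0) (f g : Y →ᵇ ℝ≥0) (h : ∀ x, g x = c * f x) :
    rmkL u κ g = c * rmkL u κ f := by
  apply rmkL_unique
  have : (fun n => ∫⁻ y, (g y : ℝ≥0∞) ∂(κ n))
      = fun n => (c : ℝ≥0∞) * ∫⁻ y, (f y : ℝ≥0∞) ∂(κ n) := by
    funext n
    rw [← lintegral_const_mul _ (f.continuous.measurable.coe_nnreal_ennreal)]
    congr 1 with y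
    simp [h y, ENNReal.coe_mul]
  rw [this]
  exact ENNReal.Tendsto.const_mul (rmkL_tendsto u κ f) (Or.inr ENNReal.coe_ne_top)

lemma rmkL_sum (hκ : ∀ n, (κ n) Set.univ = 1) {ι : Type*} (s : Finset ι) (g : ι → (Y →ᵇ ℝ≥0)) :
    rmkL u κ (∑ i ∈ s, g i) = ∑ i ∈ s, rmkL u κ (g i) := by
  classical
  induction s using Finset.induction with
  | empty =>
      simp only [Finset.sum_empty]
      have h0 : (0 : Y →ᵇ ℝ≥0) = BoundedContinuousFunction.const Y 0 := by ext x; simp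
      rw [h0, rmkL_const u κ hκ]; simp
  | insert _ _ hi ih =>
      rw [Finset.sum_insert hi, rmkL_add u κ, ih, Finset.sum_insert hi]

lemma rmkL_le_const (hκ : ∀ n, (κ n) Set.univ = 1) {f : Y →ᵇ ℝ≥0} {C : ℝ≥0} (h : ∀ x, f x ≤ C) : rmkL u κ f ≤ C := by
  have := rmkL_mono u κ (g := BoundedContinuousFunction.const Y C) (f := f) (by simpa using h)
  simpa [rmkL_const u κ hκ] using this

lemma rmkL_ne_top (hκ : ∀ n, (κ n) Set.univ = 1) (f : Y →ᵇ ℝ≥0) : rmkL u κ f ≠ ∞ := by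
  obtain ⟨C, hC⟩ := (isCompact_range f.continuous).bddAbove
  exact ((rmkL_le_const u κ hκ (fun x => hC ⟨x, rfl⟩)).trans_lt ENNReal.coe_lt_top).ne

end RMK

section RMK2

variable {Y : Type*} [MetricSpace Y] [CompactSpace Y] [MeasurableSpace Y] [BorelSpace Y]
variable (u : Ultrafilter ℕ) (κ : ℕ → Measure Y)

/-- Riesz content candidate. -/
noncomputable def rcc (K : Set Y) : ℝ≥0∞ :=
  ⨅ (f : Y →ᵇ ℝ≥0) (_ : ∀ x ∈ K, 1 ≤ f x), rmkL u κ f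

lemma rcc_le {K : Set Y} {f : Y →ᵇ ℝ≥0} (h : ∀ x ∈ K, 1 ≤ f x) :
    rcc u κ K ≤ rmkL u κ f :=
  iInf₂_le f h

lemma rcc_le_one (hκ : ∀ n, (κ n) Set.univ = 1) (K : Set Y) : rcc u κ K ≤ 1 := by
  have := rcc_le u κ (K := K) (f := BoundedContinuousFunction.const Y 1) (by simp)
  simpa [rmkL_const u κ hκ] using this

lemma rcc_ne_top (hκ : ∀ n, (κ n) Set.univ = 1) (K : Set Y) : rcc u κ K ≠ ∞ :=
  ((rcc_le_one u κ hκ K).trans_lt (by norm_num)).ne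

lemma rcc_mono {K₁ K₂ : Set Y} (h : K₁ ⊆ K₂) : rcc u κ K₁ ≤ rcc u κ K₂ :=
  le_iInf₂ fun f hf => rcc_le u κ (fun x hx => hf x (h hx))

lemma rcc_union_le (hκ : ∀ n, (κ n) Set.univ = 1) (K₁ K₂ : Set Y) :
    rcc u κ (K₁ ∪ K₂) ≤ rcc u κ K₁ + rcc u κ K₂ := by
  refine ENNReal.le_of_forall_pos_le_add fun ε hε _ => ?_
  have hε2 : ((ε : ℝ≥0∞) / 2) ≠ 0 := by
    simp [ENNReal.div_eq_zero_iff, (ENNReal.coe_pos.2 hε).ne']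
  have h1 : rcc u κ K₁ < rcc u κ K₁ + ε / 2 :=
    ENNReal.lt_add_right (rcc_ne_top u κ hκ K₁) hε2
  have h2 : rcc u κ K₂ < rcc u κ K₂ + ε / 2 :=
    ENNReal.lt_add_right (rcc_ne_top u κ hκ K₂) hε2
  rw [rcc] at h1 h2
  obtain ⟨f₁, hmem₁⟩ := iInf_lt_iff.mp h1
  obtain ⟨hf₁, hlt₁⟩ := iInf_lt_iff.mp hmem₁
  obtain ⟨f₂, hmem₂⟩ := iInf_lt_iff.mp h2
  obtain ⟨hf₂, hlt₂⟩ := iInf_lt_iff.mp hmem₂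
  have hsum : rcc u κ (K₁ ∪ K₂) ≤ rmkL u κ (f₁ + f₂) := by
    refine rcc_le u κ fun x hx => ?_
    rcases hx with hx | hx
    · calc (1 : ℝ≥0) ≤ f₁ x := hf₁ x hx
        _ ≤ f₁ x + f₂ x := le_self_add
        _ = (f₁ + f₂) x := by simp
    · calc (1 : ℝ≥0) ≤ f₂ x := hf₂ x hx
        _ ≤ f₁ x + f₂ x := le_add_self
        _ = (f₁ + f₂) x := by simp
  rw [rmkL_add u κ] at hsum
  calc rcc u κ (K₁ ∪ K₂) ≤ rmkL u κ f₁ + rmkL u κ f₂ := hsum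
    _ ≤ (rcc u κ K₁ + ε / 2) + (rcc u κ K₂ + ε / 2) := add_le_add hlt₁.le hlt₂.le
    _ = rcc u κ K₁ + rcc u κ K₂ + (ε / 2 + ε / 2) := by ring
    _ = rcc u κ K₁ + rcc u κ K₂ + ε := by rw [ENNReal.add_halves]

lemma rcc_union_disjoint (K₁ K₂ : Set Y) (hd : Disjoint K₁ K₂)
    (hc₁ : IsClosed K₁) (hc₂ : IsClosed K₂) :
    rcc u κ K₁ + rcc u κ K₂ ≤ rcc u κ (K₁ ∪ K₂) := by
  refine le_iInf₂ fun g hg => ?_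
  obtain ⟨χ, hχ₁, hχ₂, hχ01⟩ := exists_continuous_zero_one_of_isClosed hc₁ hc₂ hd
  have hcont : Continuous fun x => (χ x).toNNReal :=
    continuous_real_toNNReal.comp χ.continuous
  have ht_le_one : ∀ x, (χ x).toNNReal ≤ 1 := fun x => by
    have := (hχ01 x).2
    calc (χ x).toNNReal ≤ (1 : ℝ).toNNReal := Real.toNNReal_mono this
      _ = 1 := Real.toNNReal_one
  set g₁ : Y →ᵇ ℝ≥0 := mkOfCompact ⟨fun x => g x * (1 - (χ x).toNNReal),
    by fun_prop⟩ with hg₁def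
  set g₂ : Y →ᵇ ℝ≥0 := mkOfCompact ⟨fun x => g x * (χ x).toNNReal,
    by fun_prop⟩ with hg₂def
  have hsplit : ∀ x, g x = g₁ x + g₂ x := by
    intro x
    simp only [hg₁def, hg₂def, mkOfCompact_apply, ContinuousMap.coe_mk]
    rw [← mul_add, tsub_add_cancel_of_le (ht_le_one x), mul_one]
  have hmem₁ : ∀ x ∈ K₁, 1 ≤ g₁ x := by
    intro x hx
    have : (χ x).toNNReal = 0 := by simp [hχ₁ hx]
    simp only [hg₁def, mkOfCompact_apply, ContinuousMap.coe_mk, this, tsub_zero, mul_one]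
    exact hg x (Or.inl hx)
  have hmem₂ : ∀ x ∈ K₂, 1 ≤ g₂ x := by
    intro x hx
    have : (χ x).toNNReal = 1 := by simp [hχ₂ hx]
    simp only [hg₂def, mkOfCompact_apply, ContinuousMap.coe_mk, this, mul_one]
    exact hg x (Or.inr hx)
  have hgsum : g = g₁ + g₂ := by
    ext x
    simp only [BoundedContinuousFunction.coe_add, Pi.add_apply]
    exact_mod_cast hsplit x
  calc rcc u κ K₁ + rcc u κ K₂ ≤ rmkL u κ g₁ + rmkL u κ g₂ :=
        add_le_add (rcc_le u κ hmem₁) (rcc_le u κ hmem₂)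
    _ = rmkL u κ (g₁ + g₂) := (rmkL_add u κ g₁ g₂).symm
    _ = rmkL u κ g := by rw [← hgsum]

/-- The content associated to the limit functional. -/
noncomputable def rmkContent (hκ : ∀ n, (κ n) Set.univ = 1) : Content Y where
  toFun K := (rcc u κ K).toNNReal
  mono' K₁ K₂ h := ENNReal.toNNReal_mono (rcc_ne_top u κ hκ K₂) (rcc_mono u κ h)
  sup_disjoint' K₁ K₂ hd hc₁ hc₂ := by
    have h : rcc u κ ((K₁ ⊔ K₂ : TopologicalSpace.Compacts Y) : Set Y)
        = rcc u κ K₁ + rcc u κ K₂ := by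
      rw [TopologicalSpace.Compacts.coe_sup]
      exact le_antisymm (rcc_union_le u κ hκ _ _) (rcc_union_disjoint u κ _ _ hd hc₁ hc₂)
    show (rcc u κ ((K₁ ⊔ K₂ : TopologicalSpace.Compacts Y) : Set Y)).toNNReal
        = (rcc u κ (K₁ : Set Y)).toNNReal + (rcc u κ (K₂ : Set Y)).toNNReal
    rw [h, ENNReal.toNNReal_add (rcc_ne_top u κ hκ _) (rcc_ne_top u κ hκ _)]
  sup_le' K₁ K₂ := by
    have h : rcc u κ ((K₁ ⊔ K₂ : TopologicalSpace.Compacts Y) : Set Y)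
        ≤ rcc u κ K₁ + rcc u κ K₂ := by
      rw [TopologicalSpace.Compacts.coe_sup]
      exact rcc_union_le u κ hκ _ _
    have h2 := ENNReal.toNNReal_mono
      (by exact ENNReal.add_ne_top.2 ⟨rcc_ne_top u κ hκ _, rcc_ne_top u κ hκ _⟩) h
    show (rcc u κ ((K₁ ⊔ K₂ : TopologicalSpace.Compacts Y) : Set Y)).toNNReal
        ≤ (rcc u κ (K₁ : Set Y)).toNNReal + (rcc u κ (K₂ : Set Y)).toNNReal
    rwa [ENNReal.toNNReal_add (rcc_ne_top u κ hκ _) (rcc_ne_top u κ hκ _)] at h2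

lemma rmkContent_coe (hκ : ∀ n, (κ n) Set.univ = 1) (K : TopologicalSpace.Compacts Y) :
    (rmkContent u κ hκ) K = rcc u κ (K : Set Y) :=
  ENNReal.coe_toNNReal (rcc_ne_top u κ hκ _)

/-- The optimal measure: the measure associated to the content. -/
noncomputable def rmkMeasure (hκ : ∀ n, (κ n) Set.univ = 1) : Measure Y :=
  (rmkContent u κ hκ).measure

lemma rmkMeasure_open_le (hκ : ∀ n, (κ n) Set.univ = 1) {U : Set Y} (hU : IsOpen U)
    {f : Y →ᵇ ℝ≥0} (hf : ∀ x ∈ U, 1 ≤ f x) :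
    rmkMeasure u κ hκ U ≤ rmkL u κ f := by
  rw [rmkMeasure, Content.measure_apply _ hU.measurableSet,
    (rmkContent u κ hκ).outerMeasure_of_isOpen U hU, Content.innerContent]
  refine iSup₂_le fun K hK => ?_
  rw [rmkContent_coe u κ hκ]
  exact rcc_le u κ fun x hx => hf x (hK hx)

lemma rmkMeasure_univ (hκ : ∀ n, (κ n) Set.univ = 1) :
    rmkMeasure u κ hκ Set.univ = 1 := by
  rw [rmkMeasure, Content.measure_apply _ MeasurableSet.univ,
    (rmkContent u κ hκ).outerMeasure_of_isOpen Set.univ isOpen_univ]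
  rw [(rmkContent u κ hκ).innerContent_of_isCompact isCompact_univ isOpen_univ]
  have hcoe : ((fun s => ((rmkContent u κ hκ).toFun s : ℝ≥0∞))
      (⟨Set.univ, isCompact_univ⟩ : TopologicalSpace.Compacts Y))
      = rcc u κ Set.univ := rmkContent_coe u κ hκ _
  rw [rmkContent_coe u κ hκ]
  refine le_antisymm (rcc_le_one u κ hκ _) ?_
  refine le_iInf₂ fun f hf => ?_
  have h1 : rmkL u κ (BoundedContinuousFunction.const Y 1) ≤ rmkL u κ f :=
    rmkL_mono u κ fun x => by simpa using hf x (Set.mem_univ x)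
  rw [rmkL_const u κ hκ] at h1
  simpa using h1

end RMK2

section RMK3

lemma nnreal_tele (ε t : ℝ≥0) : ∀ N : ℕ,
    ∑ i ∈ Finset.range N, min (t - (i : ℝ≥0) * ε) ε = min t ((N : ℝ≥0) * ε) := by
  intro N
  induction N with
  | zero => simp
  | succ M ih =>
      rw [Finset.sum_range_succ, ih]
      rcases le_total t ((M : ℝ≥0) * ε) with h | h
      · have h1 : min t ((M : ℝ≥0) * ε) = t := min_eq_left h
        have h2 : t - (M : ℝ≥0) * ε = 0 := tsub_eq_zero_of_le h
        have h3 : t ≤ ((M + 1 : ℕ) : ℝ≥0) * ε := by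
          refine h.trans ?_
          gcongr
          exact_mod_cast Nat.le_succ M
        rw [h1, h2, min_eq_left h3]
        simp
      · have h1 : min t ((M : ℝ≥0) * ε) = (M : ℝ≥0) * ε := min_eq_right h
        rw [h1, min_add_add_left ((M : ℝ≥0) * ε) _ _ |>.symm]
        rw [add_tsub_cancel_of_le h]
        congr 1
        push_cast
        ring

variable {Y : Type*} [MetricSpace Y] [CompactSpace Y] [MeasurableSpace Y] [BorelSpace Y]
variable (u : Ultrafilter ℕ) (κ : ℕ → Measure Y)

lemma rmk_lintegral_le (hκ : ∀ n, (κ n) Set.univ = 1) (f : Y →ᵇ ℝ≥0) :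
    ∫⁻ y, (f y : ℝ≥0∞) ∂(rmkMeasure u κ hκ) ≤ rmkL u κ f := by
  refine ENNReal.le_of_forall_pos_le_add fun ε hε _ => ?_
  obtain ⟨C, hC⟩ := (isCompact_range f.continuous).bddAbove
  have hfC : ∀ x, f x ≤ C := fun x => hC ⟨x, rfl⟩
  -- the slicing functions
  set g : ℕ → (Y →ᵇ ℝ≥0) := fun i => mkOfCompact ⟨fun x => min (f x - (i : ℝ≥0) * ε) ε,
    by fun_prop⟩ with hgdef
  have hgapp : ∀ i x, g i x = min (f x - (i : ℝ≥0) * ε) ε := fun i x => rfl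
  set N : ℕ := ⌈(C : ℝ≥0) / ε⌉₊ with hNdef
  have hNC : C ≤ (N : ℝ≥0) * ε := by
    calc C = C / ε * ε := (div_mul_cancel₀ C hε.ne').symm
      _ ≤ (N : ℝ≥0) * ε := by gcongr; exact Nat.le_ceil _
  have hsum : ∀ x, ∑ i ∈ Finset.range N, g i x = f x := by
    intro x
    rw [show ∑ i ∈ Finset.range N, g i x
        = ∑ i ∈ Finset.range N, min (f x - (i : ℝ≥0) * ε) ε from rfl, nnreal_tele]
    exact min_eq_left ((hfC x).trans hNC)
  -- open sets
  have hUopen : ∀ i : ℕ, IsOpen {x : Y | (i : ℝ≥0) * ε < f x} := by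
    intro i
    exact isOpen_lt continuous_const (by continuity)
  -- pointwise: g i ≤ ε * indicator
  have hind : ∀ i : ℕ, ∫⁻ x, (g i x : ℝ≥0∞) ∂(rmkMeasure u κ hκ)
      ≤ (ε : ℝ≥0∞) * (rmkMeasure u κ hκ) {x : Y | (i : ℝ≥0) * ε < f x} := by
    intro i
    rw [← lintegral_indicator_const (hUopen i).measurableSet (ε : ℝ≥0∞)]
    refine lintegral_mono fun x => ?_
    by_cases hx : (i : ℝ≥0) * ε < f x
    · rw [Set.indicator_of_mem (show x ∈ {x : Y | (i : ℝ≥0) * ε < f x} from hx)]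
      exact ENNReal.coe_le_coe.2 (min_le_right _ _)
    · have : f x - (i : ℝ≥0) * ε = 0 := tsub_eq_zero_of_le (not_lt.mp hx)
      rw [show (g i x : ℝ≥0∞) = ((min (f x - (i : ℝ≥0) * ε) ε : ℝ≥0) : ℝ≥0∞) from rfl, this]
      simp
  -- for i+1 : measure of U (i+1) is at most ε⁻¹ * rmkL (g i)
  have hval : ∀ i : ℕ, (rmkMeasure u κ hκ) {x : Y | ((i + 1 : ℕ) : ℝ≥0) * ε < f x}
      ≤ (ε⁻¹ : ℝ≥0) * rmkL u κ (g i) := by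
    intro i
    set φ : Y →ᵇ ℝ≥0 := mkOfCompact ⟨fun x => ε⁻¹ * min (f x - (i : ℝ≥0) * ε) ε,
      by fun_prop⟩ with hφdef
    have hφ1 : ∀ x ∈ {x : Y | ((i + 1 : ℕ) : ℝ≥0) * ε < f x}, 1 ≤ φ x := by
      intro x hx
      have hx' : (i : ℝ≥0) * ε + ε ≤ f x := by
        have : ((i + 1 : ℕ) : ℝ≥0) * ε = (i : ℝ≥0) * ε + ε := by push_cast; ring
        rw [← this]
        exact le_of_lt hx
      have hmin : min (f x - (i : ℝ≥0) * ε) ε = ε := by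
        refine min_eq_right ?_
        exact le_tsub_of_add_le_left hx'
      show (1 : ℝ≥0) ≤ ε⁻¹ * min (f x - (i : ℝ≥0) * ε) ε
      rw [hmin, inv_mul_cancel₀ hε.ne']
    have hsmul : rmkL u κ φ = (ε⁻¹ : ℝ≥0) * rmkL u κ (g i) :=
      rmkL_smul u κ ε⁻¹ (g i) φ (fun x => rfl)
    calc (rmkMeasure u κ hκ) {x : Y | ((i + 1 : ℕ) : ℝ≥0) * ε < f x}
        ≤ rmkL u κ φ := rmkMeasure_open_le u κ hκ (hUopen (i + 1)) hφ1
      _ = (ε⁻¹ : ℝ≥0) * rmkL u κ (g i) := hsmul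
  -- put everything together
  have key : ∫⁻ y, (f y : ℝ≥0∞) ∂(rmkMeasure u κ hκ)
      = ∑ i ∈ Finset.range N, ∫⁻ x, (g i x : ℝ≥0∞) ∂(rmkMeasure u κ hκ) := by
    rw [← lintegral_finset_sum _ (fun i _ => (g i).continuous.measurable.coe_nnreal_ennreal)]
    congr 1 with x
    rw [← hsum x]
    push_cast
    rfl
  rcases Nat.eq_zero_or_pos N with hN0 | hNpos
  · rw [key, hN0]
    simp
  · obtain ⟨M, hM⟩ : ∃ M, N = M + 1 := ⟨N - 1, (Nat.succ_pred_eq_of_pos hNpos).symm⟩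
    have hterm : ∀ i : ℕ, ∫⁻ x, (g (i + 1) x : ℝ≥0∞) ∂(rmkMeasure u κ hκ)
        ≤ rmkL u κ (g i) := by
      intro i
      calc ∫⁻ x, (g (i + 1) x : ℝ≥0∞) ∂(rmkMeasure u κ hκ)
          ≤ (ε : ℝ≥0∞) * (rmkMeasure u κ hκ) {x : Y | ((i + 1 : ℕ) : ℝ≥0) * ε < f x} := by
            have := hind (i + 1)
            simpa using this
        _ ≤ (ε : ℝ≥0∞) * ((ε⁻¹ : ℝ≥0) * rmkL u κ (g i)) := by
            gcongr
            exact hval i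
        _ = ((ε * ε⁻¹ : ℝ≥0) : ℝ≥0∞) * rmkL u κ (g i) := by
            rw [ENNReal.coe_mul, mul_assoc]
        _ = rmkL u κ (g i) := by
            rw [mul_inv_cancel₀ hε.ne']
            simp
    have hfirst : ∫⁻ x, (g 0 x : ℝ≥0∞) ∂(rmkMeasure u κ hκ) ≤ (ε : ℝ≥0∞) := by
      calc ∫⁻ x, (g 0 x : ℝ≥0∞) ∂(rmkMeasure u κ hκ)
          ≤ (ε : ℝ≥0∞) * (rmkMeasure u κ hκ) {x : Y | ((0 : ℕ) : ℝ≥0) * ε < f x} := hind 0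
        _ ≤ (ε : ℝ≥0∞) * (rmkMeasure u κ hκ) Set.univ :=
            mul_le_mul_right (measure_mono (Set.subset_univ _)) _
        _ = ε := by rw [rmkMeasure_univ u κ hκ, mul_one]
    have hrest : ∑ i ∈ Finset.range M, rmkL u κ (g i) ≤ rmkL u κ f := by
      rw [← rmkL_sum u κ hκ]
      refine rmkL_mono u κ fun x => ?_
      calc (∑ i ∈ Finset.range M, g i) x = ∑ i ∈ Finset.range M, g i x := by simp
        _ ≤ ∑ i ∈ Finset.range N, g i x := by
            refine Finset.sum_le_sum_of_subset ?_
            rw [hM]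
            exact Finset.range_subset_range.2 (Nat.le_succ M)
        _ = f x := hsum x
    calc ∫⁻ y, (f y : ℝ≥0∞) ∂(rmkMeasure u κ hκ)
        = ∑ i ∈ Finset.range N, ∫⁻ x, (g i x : ℝ≥0∞) ∂(rmkMeasure u κ hκ) := key
      _ = (∑ i ∈ Finset.range M, ∫⁻ x, (g (i + 1) x : ℝ≥0∞) ∂(rmkMeasure u κ hκ))
          + ∫⁻ x, (g 0 x : ℝ≥0∞) ∂(rmkMeasure u κ hκ) := by
            rw [hM, Finset.sum_range_succ' _ M]
      _ ≤ (∑ i ∈ Finset.range M, rmkL u κ (g i)) + (ε : ℝ≥0∞) :=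
            add_le_add (Finset.sum_le_sum fun i _ => hterm i) hfirst
      _ ≤ rmkL u κ f + ε := add_le_add_left hrest _

lemma rmk_lintegral_eq (hκ : ∀ n, (κ n) Set.univ = 1) (f : Y →ᵇ ℝ≥0) :
    ∫⁻ y, (f y : ℝ≥0∞) ∂(rmkMeasure u κ hκ) = rmkL u κ f := by
  refine le_antisymm (rmk_lintegral_le u κ hκ f) ?_
  obtain ⟨C, hC⟩ := (isCompact_range f.continuous).bddAbove
  have hfC : ∀ x, f x ≤ C := fun x => hC ⟨x, rfl⟩
  set gc : Y →ᵇ ℝ≥0 := mkOfCompact ⟨fun x => C - f x, by fun_prop⟩ with hgcdef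
  have hsum : ∀ x, f x + gc x = C := fun x => add_tsub_cancel_of_le (hfC x)
  have hL : rmkL u κ f + rmkL u κ gc = (C : ℝ≥0∞) := by
    rw [← rmkL_add u κ f gc]
    have : f + gc = BoundedContinuousFunction.const Y C := by
      ext x
      simp only [BoundedContinuousFunction.coe_add, Pi.add_apply, const_apply]
      exact_mod_cast hsum x
    rw [this, rmkL_const u κ hκ]
  have hI : (∫⁻ y, (f y : ℝ≥0∞) ∂(rmkMeasure u κ hκ))
      + ∫⁻ y, (gc y : ℝ≥0∞) ∂(rmkMeasure u κ hκ) = (C : ℝ≥0∞) := by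
    rw [← lintegral_add_left f.continuous.measurable.coe_nnreal_ennreal]
    have heq : ∀ y, (f y : ℝ≥0∞) + (gc y : ℝ≥0∞) = (C : ℝ≥0∞) := by
      intro y
      rw [← ENNReal.coe_add, hsum y]
    calc ∫⁻ y, ((f y : ℝ≥0∞) + (gc y : ℝ≥0∞)) ∂(rmkMeasure u κ hκ)
        = ∫⁻ _, (C : ℝ≥0∞) ∂(rmkMeasure u κ hκ) := by
          congr 1 with y
          exact heq y
      _ = (C : ℝ≥0∞) := by rw [lintegral_const, rmkMeasure_univ u κ hκ, mul_one]
  have hgc_le : ∫⁻ y, (gc y : ℝ≥0∞) ∂(rmkMeasure u κ hκ) ≤ rmkL u κ gc :=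
    rmk_lintegral_le u κ hκ gc
  have hfin : rmkL u κ gc ≠ ∞ := rmkL_ne_top u κ hκ gc
  have : rmkL u κ f + rmkL u κ gc
      ≤ (∫⁻ y, (f y : ℝ≥0∞) ∂(rmkMeasure u κ hκ)) + rmkL u κ gc := by
    rw [hL]
    rw [← hI]
    exact add_le_add_right hgc_le _
  exact (ENNReal.add_le_add_iff_right hfin).mp this

end RMK3


section Attain

variable {X : Type*} [MetricSpace X] [CompactSpace X] [MeasurableSpace X] [BorelSpace X]

/-- The set of costs of couplings. -/
def costSet (m ν : ProbabilityMeasure X) : Set ℝ :=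
  {c : ℝ | ∃ γ : Measure (X × X), IsCoupling γ m ν ∧
    c = ∫ p, dist p.1 p.2 ^ 2 ∂γ}

lemma W2sq_eq_sInf_costSet (m ν : ProbabilityMeasure X) : W2sq m ν = sInf (costSet m ν) := rfl

lemma costSet_nonempty (m ν : ProbabilityMeasure X) : (costSet m ν).Nonempty := by
  refine ⟨∫ p, dist p.1 p.2 ^ 2 ∂((m : Measure X).prod (ν : Measure X)),
    (m : Measure X).prod (ν : Measure X), ⟨?_, ?_⟩, rfl⟩
  · rw [Measure.map_fst_prod]
    simp
  · rw [Measure.map_snd_prod]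
    simp

lemma costSet_nonneg (m ν : ProbabilityMeasure X) {c : ℝ} (hc : c ∈ costSet m ν) : 0 ≤ c := by
  obtain ⟨γ, -, rfl⟩ := hc
  exact integral_nonneg fun p => pow_nonneg dist_nonneg 2

lemma costSet_bddBelow (m ν : ProbabilityMeasure X) : BddBelow (costSet m ν) :=
  ⟨0, fun _ hc => costSet_nonneg m ν hc⟩

lemma W2sq_nonneg (m ν : ProbabilityMeasure X) : 0 ≤ W2sq m ν :=
  le_csInf (costSet_nonempty m ν) fun _ hc => costSet_nonneg m ν hc

lemma W2sq_le_of_mem {m ν : ProbabilityMeasure X} {c : ℝ} (hc : c ∈ costSet m ν) :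
    W2sq m ν ≤ c :=
  csInf_le (costSet_bddBelow m ν) hc

/-- The cost function as a bounded continuous real function. -/
noncomputable def costBCF (X : Type*) [MetricSpace X] [CompactSpace X] : (X × X) →ᵇ ℝ :=
  mkOfCompact ⟨fun p => dist p.1 p.2 ^ 2, by fun_prop⟩

/-- The cost function as a bounded continuous `ℝ≥0` function. -/
noncomputable def costNN (X : Type*) [MetricSpace X] [CompactSpace X] : (X × X) →ᵇ ℝ≥0 :=
  mkOfCompact ⟨fun p => nndist p.1 p.2 ^ 2, by fun_prop⟩

lemma costNN_coe (p : X × X) :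
    ((costNN X p : ℝ≥0) : ℝ≥0∞) = ENNReal.ofReal (dist p.1 p.2 ^ 2) := by
  have : dist p.1 p.2 ^ 2 = ((nndist p.1 p.2 ^ 2 : ℝ≥0) : ℝ) := by
    rw [dist_nndist]
    push_cast
    ring
  rw [this, ENNReal.ofReal_coe_nnreal]
  rfl

lemma cost_integrable (ρ : Measure (X × X)) [IsFiniteMeasure ρ] :
    Integrable (fun p : X × X => dist p.1 p.2 ^ 2) ρ := by
  have := (costBCF X).integrable ρ
  exact this

lemma cost_lintegral_eq (ρ : Measure (X × X)) [IsFiniteMeasure ρ] :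
    ∫⁻ p, ((costNN X p : ℝ≥0) : ℝ≥0∞) ∂ρ
      = ENNReal.ofReal (∫ p, dist p.1 p.2 ^ 2 ∂ρ) := by
  rw [ofReal_integral_eq_lintegral_ofReal (cost_integrable ρ)
    (Filter.Eventually.of_forall fun p => pow_nonneg dist_nonneg 2)]
  exact lintegral_congr fun p => costNN_coe p

theorem exists_optimal_coupling (m ν : ProbabilityMeasure X) :
    ∃ γ : Measure (X × X), IsCoupling γ m ν ∧
      (∫ p, dist p.1 p.2 ^ 2 ∂γ) = W2sq m ν := by
  classical
  set I : ℝ := W2sq m ν with hIdef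
  -- near-optimal couplings
  have hnear : ∀ n : ℕ, ∃ γ : Measure (X × X), IsCoupling γ m ν ∧
      (∫ p, dist p.1 p.2 ^ 2 ∂γ) < I + 1 / (n + 1) := by
    intro n
    have hlt : sInf (costSet m ν) < I + 1 / (n + 1) := by
      rw [← W2sq_eq_sInf_costSet]
      have : (0 : ℝ) < 1 / (n + 1) := by positivity
      linarith
    obtain ⟨c, hc, hclt⟩ := exists_lt_of_csInf_lt (costSet_nonempty m ν) hlt
    obtain ⟨γ, hγ, rfl⟩ := hc
    exact ⟨γ, hγ, hclt⟩
  choose κ hκc hκcost using hnear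
  have hκuniv : ∀ n, (κ n) Set.univ = 1 := by
    intro n
    have h1 : (κ n).map Prod.fst Set.univ = 1 := by
      rw [(hκc n).1]
      simp
    rwa [Measure.map_apply measurable_fst MeasurableSet.univ, Set.preimage_univ] at h1
  have hκprob : ∀ n, IsProbabilityMeasure (κ n) := fun n => ⟨hκuniv n⟩
  obtain ⟨u, hu⟩ := exists_ultrafilter_le (atTop : Filter ℕ)
  set γ : Measure (X × X) := rmkMeasure u κ hκuniv with hγdef
  have hγuniv : γ Set.univ = 1 := rmkMeasure_univ u κ hκuniv
  have hγprob : IsProbabilityMeasure γ := ⟨hγuniv⟩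
  -- marginals
  have hmarg : ∀ (pr : (X × X) → X), Measurable pr → Continuous pr →
      (∀ n, (κ n).map pr = (m : Measure X)) → γ.map pr = (m : Measure X) := by
    intro pr hprm hprc hn
    haveI : IsProbabilityMeasure (γ.map pr) := Measure.isProbabilityMeasure_map hprm.aemeasurable
    refine ext_of_forall_lintegral_eq_of_IsFiniteMeasure fun f => ?_
    set F : (X × X) →ᵇ ℝ≥0 := f.compContinuous ⟨pr, hprc⟩ with hFdef
    have hFapp : ∀ p, F p = f (pr p) := fun p => rfl
    have h1 : ∫⁻ x, (f x : ℝ≥0∞) ∂(γ.map pr) = ∫⁻ p, (F p : ℝ≥0∞) ∂γ := by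
      rw [lintegral_map f.continuous.measurable.coe_nnreal_ennreal hprm]
      rfl
    have h2 : ∫⁻ p, (F p : ℝ≥0∞) ∂γ = rmkL u κ F := rmk_lintegral_eq u κ hκuniv F
    have h3 : rmkL u κ F = ∫⁻ x, (f x : ℝ≥0∞) ∂(m : Measure X) := by
      apply rmkL_unique
      have : (fun n => ∫⁻ p, (F p : ℝ≥0∞) ∂(κ n))
          = fun _ => ∫⁻ x, (f x : ℝ≥0∞) ∂(m : Measure X) := by
        funext n
        rw [← hn n, lintegral_map f.continuous.measurable.coe_nnreal_ennreal hprm]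
        rfl
      rw [this]
      exact tendsto_const_nhds
    rw [h1, h2, h3]
  have hfst : γ.map Prod.fst = (m : Measure X) :=
    hmarg Prod.fst measurable_fst continuous_fst (fun n => (hκc n).1)
  -- second marginal (to ν)
  have hmargν : ∀ (pr : (X × X) → X), Measurable pr → Continuous pr →
      (∀ n, (κ n).map pr = (ν : Measure X)) → γ.map pr = (ν : Measure X) := by
    intro pr hprm hprc hn
    haveI : IsProbabilityMeasure (γ.map pr) := Measure.isProbabilityMeasure_map hprm.aemeasurable
    refine ext_of_forall_lintegral_eq_of_IsFiniteMeasure fun f => ?_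
    set F : (X × X) →ᵇ ℝ≥0 := f.compContinuous ⟨pr, hprc⟩ with hFdef
    have h1 : ∫⁻ x, (f x : ℝ≥0∞) ∂(γ.map pr) = ∫⁻ p, (F p : ℝ≥0∞) ∂γ := by
      rw [lintegral_map f.continuous.measurable.coe_nnreal_ennreal hprm]
      rfl
    have h2 : ∫⁻ p, (F p : ℝ≥0∞) ∂γ = rmkL u κ F := rmk_lintegral_eq u κ hκuniv F
    have h3 : rmkL u κ F = ∫⁻ x, (f x : ℝ≥0∞) ∂(ν : Measure X) := by
      apply rmkL_unique
      have : (fun n => ∫⁻ p, (F p : ℝ≥0∞) ∂(κ n))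
          = fun _ => ∫⁻ x, (f x : ℝ≥0∞) ∂(ν : Measure X) := by
        funext n
        rw [← hn n, lintegral_map f.continuous.measurable.coe_nnreal_ennreal hprm]
        rfl
      rw [this]
      exact tendsto_const_nhds
    rw [h1, h2, h3]
  have hsnd : γ.map Prod.snd = (ν : Measure X) :=
    hmargν Prod.snd measurable_snd continuous_snd (fun n => (hκc n).2)
  have hcoupling : IsCoupling γ m ν := ⟨hfst, hsnd⟩
  -- the cost
  have hInonneg : (0 : ℝ) ≤ I := W2sq_nonneg m ν
  have hcostn_mem : ∀ n, (∫ p, dist p.1 p.2 ^ 2 ∂(κ n)) ∈ costSet m ν :=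
    fun n => ⟨κ n, hκc n, rfl⟩
  have hlow : ∀ n, ENNReal.ofReal I ≤ ∫⁻ p, ((costNN X p : ℝ≥0) : ℝ≥0∞) ∂(κ n) := by
    intro n
    haveI := hκprob n
    rw [cost_lintegral_eq (κ n)]
    exact ENNReal.ofReal_le_ofReal (W2sq_le_of_mem (hcostn_mem n))
  have hhigh : ∀ n, (∫⁻ p, ((costNN X p : ℝ≥0) : ℝ≥0∞) ∂(κ n))
      ≤ ENNReal.ofReal (I + 1 / (n + 1)) := by
    intro n
    haveI := hκprob n
    rw [cost_lintegral_eq (κ n)]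
    exact ENNReal.ofReal_le_ofReal (hκcost n).le
  have hupper_tendsto : Tendsto (fun n : ℕ => ENNReal.ofReal (I + 1 / (n + 1)))
      atTop (𝓝 (ENNReal.ofReal I)) := by
    have h0 : Tendsto (fun n : ℕ => I + 1 / ((n : ℝ) + 1)) atTop (𝓝 (I + 0)) :=
      tendsto_const_nhds.add tendsto_one_div_add_atTop_nhds_zero_nat
    rw [add_zero] at h0
    exact (ENNReal.continuous_ofReal.tendsto I).comp h0
  have hL : rmkL u κ (costNN X) = ENNReal.ofReal I := by
    have ht := rmkL_tendsto u κ (costNN X)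
    refine le_antisymm ?_ ?_
    · exact le_of_tendsto_of_tendsto' ht (hupper_tendsto.mono_left hu) hhigh
    · exact le_of_tendsto_of_tendsto' tendsto_const_nhds ht hlow
  have hcostγ : (∫ p, dist p.1 p.2 ^ 2 ∂γ) = I := by
    haveI := hγprob
    have h1 : ENNReal.ofReal (∫ p, dist p.1 p.2 ^ 2 ∂γ) = ENNReal.ofReal I := by
      rw [← cost_lintegral_eq γ, rmk_lintegral_eq u κ hκuniv (costNN X), hL]
    have h2 := congrArg ENNReal.toReal h1
    rwa [ENNReal.toReal_ofReal (integral_nonneg fun p => pow_nonneg dist_nonneg 2),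
      ENNReal.toReal_ofReal hInonneg] at h2
  exact ⟨γ, hcoupling, hcostγ⟩

end Attain

section Main

variable {X : Type*} [MetricSpace X] [CompactSpace X] [MeasurableSpace X] [BorelSpace X]

lemma IsCoupling.prob {γ : Measure (X × X)} {m ν : ProbabilityMeasure X}
    (h : IsCoupling γ m ν) : IsProbabilityMeasure γ := by
  constructor
  have h1 : γ.map Prod.fst Set.univ = 1 := by rw [h.1]; simp
  rwa [Measure.map_apply measurable_fst MeasurableSet.univ, Set.preimage_univ] at h1

lemma costSet_symm (m ν : ProbabilityMeasure X) : costSet m ν = costSet ν m := by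
  have key : ∀ (a b : ProbabilityMeasure X), costSet a b ⊆ costSet b a := by
    rintro a b c ⟨γ, ⟨h1, h2⟩, rfl⟩
    refine ⟨γ.map Prod.swap, ⟨?_, ?_⟩, ?_⟩
    · rw [Measure.map_map measurable_fst measurable_swap]
      exact h2
    · rw [Measure.map_map measurable_snd measurable_swap]
      exact h1
    · rw [integral_map measurable_swap.aemeasurable
        (by fun_prop : Continuous fun p : X × X => dist p.1 p.2 ^ 2).aestronglyMeasurable]
      apply integral_congr_ae
      filter_upwards with p
      simp [Prod.swap, dist_comm]
  exact le_antisymm (key m ν) (key ν m)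

lemma W2sq_symm (m ν : ProbabilityMeasure X) : W2sq m ν = W2sq ν m := by
  rw [W2sq_eq_sInf_costSet, W2sq_eq_sInf_costSet, costSet_symm]

lemma W2sq_le_W2sq {a b c d : ProbabilityMeasure X} (h : W2 a b ≤ W2 c d) :
    W2sq a b ≤ W2sq c d := by
  rw [← Real.sq_sqrt (W2sq_nonneg a b), ← Real.sq_sqrt (W2sq_nonneg c d)]
  exact pow_le_pow_left₀ (Real.sqrt_nonneg _) h 2

/-- The midpoint of two probability measures. -/
noncomputable def midPM (ν₁ ν₂ : ProbabilityMeasure X) : ProbabilityMeasure X :=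
  ⟨(2⁻¹ : ℝ≥0∞) • ((ν₁ : Measure X) + (ν₂ : Measure X)), by
    constructor
    simp only [Measure.smul_apply, Measure.add_apply, smul_eq_mul]
    rw [measure_univ, measure_univ, one_add_one_eq_two,
      ENNReal.inv_mul_cancel two_ne_zero ENNReal.ofNat_ne_top]⟩

lemma midPM_coe (ν₁ ν₂ : ProbabilityMeasure X) :
    (midPM ν₁ ν₂ : Measure X) = (2⁻¹ : ℝ≥0∞) • ((ν₁ : Measure X) + (ν₂ : Measure X)) := rfl

lemma mSupport_midPM (ν₁ ν₂ : ProbabilityMeasure X) :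
    mSupport (midPM ν₁ ν₂) ⊆ mSupport ν₁ ∪ mSupport ν₂ := by
  intro x hx
  by_contra hcon
  simp only [Set.mem_union, not_or] at hcon
  obtain ⟨h1, h2⟩ := hcon
  simp only [mSupport, Set.mem_setOf_eq, not_forall] at h1 h2
  obtain ⟨U₁, hU₁o, hxU₁, hU₁0⟩ := h1
  obtain ⟨U₂, hU₂o, hxU₂, hU₂0⟩ := h2
  simp only [ne_eq, not_not] at hU₁0 hU₂0
  have := hx (U₁ ∩ U₂) (hU₁o.inter hU₂o) ⟨hxU₁, hxU₂⟩
  apply this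
  rw [midPM_coe]
  simp only [Measure.smul_apply, Measure.add_apply, smul_eq_mul]
  have e1 : (ν₁ : Measure X) (U₁ ∩ U₂) = 0 :=
    le_antisymm (le_trans (measure_mono Set.inter_subset_left) hU₁0.le) (zero_le)
  have e2 : (ν₂ : Measure X) (U₁ ∩ U₂) = 0 :=
    le_antisymm (le_trans (measure_mono Set.inter_subset_right) hU₂0.le) (zero_le)
  rw [e1, e2, add_zero, mul_zero]

lemma snd_map_of_graph {γ : Measure (X × X)} {m0 : Measure X} {T : X → X}
    (hT : Measurable T) (hfst : γ.map Prod.fst = m0)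
    (hG : γ {p : X × X | p.2 ≠ T p.1} = 0) :
    γ.map Prod.snd = m0.map T := by
  ext B hB
  rw [Measure.map_apply measurable_snd hB, Measure.map_apply hT hB, ← hfst,
    Measure.map_apply measurable_fst (hT hB)]
  set A : Set (X × X) := Prod.snd ⁻¹' B with hA
  set A' : Set (X × X) := Prod.fst ⁻¹' (T ⁻¹' B) with hA'
  set N : Set (X × X) := {p : X × X | p.2 ≠ T p.1} with hN
  have hsub1 : A ⊆ A' ∪ N := by
    intro p hp
    by_cases hpg : p.2 = T p.1
    · left
      show T p.1 ∈ B
      rw [← hpg]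
      exact hp
    · right
      exact hpg
  have hsub2 : A' ⊆ A ∪ N := by
    intro p hp
    by_cases hpg : p.2 = T p.1
    · left
      show p.2 ∈ B
      rw [hpg]
      exact hp
    · right
      exact hpg
  refine le_antisymm ?_ ?_
  · calc γ A ≤ γ (A' ∪ N) := measure_mono hsub1
      _ ≤ γ A' + γ N := measure_union_le _ _
      _ = γ A' := by rw [hG, add_zero]
  · calc γ A' ≤ γ (A ∪ N) := measure_mono hsub2
      _ ≤ γ A + γ N := measure_union_le _ _
      _ = γ A := by rw [hG, add_zero]

theorem unique_min_W2_support_bary'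
    (m : ProbabilityMeasure X) (hreg : Regular m) (μ : ProbabilityMeasure X)
    (ν₁ ν₂ : ProbabilityMeasure X)
    (h₁ : mSupport ν₁ ⊆ bary μ ∧
      ∀ ρ : ProbabilityMeasure X, mSupport ρ ⊆ bary μ → W2 ν₁ m ≤ W2 ρ m)
    (h₂ : mSupport ν₂ ⊆ bary μ ∧
      ∀ ρ : ProbabilityMeasure X, mSupport ρ ⊆ bary μ → W2 ν₂ m ≤ W2 ρ m) :
    ν₁ = ν₂ := by
  classical
  obtain ⟨γ₁, hc₁, hcost₁⟩ := exists_optimal_coupling m ν₁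
  obtain ⟨γ₂, hc₂, hcost₂⟩ := exists_optimal_coupling m ν₂
  haveI hp₁ : IsProbabilityMeasure γ₁ := hc₁.prob
  haveI hp₂ : IsProbabilityMeasure γ₂ := hc₂.prob
  set V : ℝ := W2sq m ν₁ with hVdef
  -- the two minimal values agree
  have hV12 : W2sq m ν₂ = V := by
    have ha : W2 ν₁ m ≤ W2 ν₂ m := h₁.2 ν₂ h₂.1
    have hb : W2 ν₂ m ≤ W2 ν₁ m := h₂.2 ν₁ h₁.1
    have : W2sq ν₂ m = W2sq ν₁ m :=
      le_antisymm (W2sq_le_W2sq hb) (W2sq_le_W2sq ha)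
    rw [hVdef, W2sq_symm m ν₂, W2sq_symm m ν₁, this]
  -- the midpoint measure
  set νm : ProbabilityMeasure X := midPM ν₁ ν₂ with hνmdef
  have hsuppm : mSupport νm ⊆ bary μ := fun x hx => by
    rcases mSupport_midPM ν₁ ν₂ hx with h | h
    · exact h₁.1 h
    · exact h₂.1 h
  -- the midpoint coupling
  set γm : Measure (X × X) := (2⁻¹ : ℝ≥0∞) • (γ₁ + γ₂) with hγmdef
  have hγmc : IsCoupling γm m νm := by
    constructor
    · rw [hγmdef, Measure.map_smul, Measure.map_add _ _ measurable_fst, hc₁.1, hc₂.1]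
      rw [show ((m : Measure X) + (m : Measure X)) = (2 : ℝ≥0∞) • (m : Measure X) by
        rw [two_smul]]
      rw [smul_smul, ENNReal.inv_mul_cancel two_ne_zero ENNReal.ofNat_ne_top, one_smul]
    · rw [hγmdef, Measure.map_smul, Measure.map_add _ _ measurable_snd, hc₁.2, hc₂.2]
      rfl
  -- the cost of the midpoint coupling is V
  have hγmcost : (∫ p, dist p.1 p.2 ^ 2 ∂γm) = V := by
    rw [hγmdef, integral_smul_measure, integral_add_measure (cost_integrable γ₁)
      (cost_integrable γ₂), hcost₁, hcost₂, hV12]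
    rw [show ((2 : ℝ≥0∞)⁻¹).toReal = (2 : ℝ)⁻¹ by
      rw [ENNReal.toReal_inv]; norm_num]
    rw [smul_eq_mul]
    ring
  -- the midpoint coupling is optimal
  have hWm : W2sq m νm = V := by
    refine le_antisymm ?_ ?_
    · have : (∫ p, dist p.1 p.2 ^ 2 ∂γm) ∈ costSet m νm := ⟨γm, hγmc, rfl⟩
      have h := W2sq_le_of_mem this
      rwa [hγmcost] at h
    · have ha : W2 ν₁ m ≤ W2 νm m := h₁.2 νm hsuppm
      have := W2sq_le_W2sq ha
      rwa [W2sq_symm ν₁ m, W2sq_symm νm m, ← hVdef] at this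
  -- regularity: the midpoint coupling is induced by a map
  obtain ⟨T, hT, hmap⟩ := hreg νm γm hγmc (by rw [hγmcost, hWm])
  -- the graph of T
  set G : Set (X × X) := {p : X × X | p.2 = T p.1} with hGdef
  have hGm : MeasurableSet G := by
    have : G = (fun p : X × X => (p.2, T p.1)) ⁻¹' (Set.diagonal X) := by
      ext p
      simp [Set.diagonal, hGdef]
    rw [this]
    exact (measurable_snd.prodMk (hT.comp measurable_fst))
      (isClosed_diagonal.measurableSet)
  have hγmG : γm Gᶜ = 0 := by
    rw [hmap, Measure.map_apply (show Measurable fun x : X => (x, T x) from measurable_id.prodMk hT) hGm.compl]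
    have : (fun x => (x, T x)) ⁻¹' Gᶜ = (∅ : Set X) := by
      ext x
      simp [hGdef]
    rw [this, measure_empty]
  have hsum2 : γ₁ + γ₂ = (2 : ℝ≥0∞) • γm := by
    rw [hγmdef, smul_smul, ENNReal.mul_inv_cancel two_ne_zero ENNReal.ofNat_ne_top, one_smul]
  have hγ₁G : γ₁ {p : X × X | p.2 ≠ T p.1} = 0 := by
    have hle : γ₁ Gᶜ ≤ (γ₁ + γ₂) Gᶜ := by
      rw [Measure.add_apply]
      exact le_self_add
    rw [hsum2, Measure.smul_apply, smul_eq_mul, hγmG, mul_zero] at hle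
    have : Gᶜ = {p : X × X | p.2 ≠ T p.1} := by
      ext p
      simp [hGdef]
    rw [← this]
    exact le_antisymm hle (zero_le)
  have hγ₂G : γ₂ {p : X × X | p.2 ≠ T p.1} = 0 := by
    have hle : γ₂ Gᶜ ≤ (γ₁ + γ₂) Gᶜ := by
      rw [Measure.add_apply]
      exact le_add_self
    rw [hsum2, Measure.smul_apply, smul_eq_mul, hγmG, mul_zero] at hle
    have : Gᶜ = {p : X × X | p.2 ≠ T p.1} := by
      ext p
      simp [hGdef]
    rw [← this]
    exact le_antisymm hle (zero_le)
  have e₁ : (ν₁ : Measure X) = (m : Measure X).map T := by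
    rw [← hc₁.2]
    exact snd_map_of_graph hT hc₁.1 hγ₁G
  have e₂ : (ν₂ : Measure X) = (m : Measure X).map T := by
    rw [← hc₂.2]
    exact snd_map_of_graph hT hc₂.1 hγ₂G
  apply Subtype.ext
  exact e₁.trans e₂.symm

end Main


end Aux


/-- If `(X,d,m)` is regular, the minimizer of `ν ↦ W₂(ν, m)` over
`{ν ∈ P(X) : supp ν ⊆ b(μ)}` is unique. -/
theorem unique_min_W2_support_bary
    {X : Type*} [MetricSpace X] [CompactSpace X]
    [MeasurableSpace X] [BorelSpace X]
    (m : ProbabilityMeasure X) (hreg : Regular m) (μ : ProbabilityMeasure X)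
    (ν₁ ν₂ : ProbabilityMeasure X)
    (h₁ : mSupport ν₁ ⊆ bary μ ∧
      ∀ ρ : ProbabilityMeasure X, mSupport ρ ⊆ bary μ → W2 ν₁ m ≤ W2 ρ m)
    (h₂ : mSupport ν₂ ⊆ bary μ ∧
      ∀ ρ : ProbabilityMeasure X, mSupport ρ ⊆ bary μ → W2 ν₂ m ≤ W2 ρ m) :
    ν₁ = ν₂ :=
  unique_min_W2_support_bary' m hreg μ ν₁ ν₂ h₁ h₂
end

section
/- Let (X,d) be a compact metric space with a fixed reference probability measure m, and assume (X,d,m) is regular: every coupling γ between m and any ν ∈ P(X) achieving the infimum defining W₂(m,ν) is of the form γ = (Id,T)_# m for some measurable map T : X → X. Let μ ∈ P(X), and for each ε > 0 let μ_ε be the unique minimizer over P(X) of F_ε(ν) := ∫_X ∫_X d(y,x)² dμ(x) dν(y) + ε·W₂(m,ν)². Then every weak-* limit point μ₀ of the family (μ_ε) as ε → 0 satisfies supp μ₀ ⊆ b(μ). -/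
open MeasureTheory Filter

open Topology

section aux
variable {X : Type*} [MetricSpace X] [CompactSpace X] [MeasurableSpace X] [BorelSpace X]

lemma g_continuous (μ : ProbabilityMeasure X) :
    Continuous (fun y : X => ∫ x, dist y x ^ 2 ∂(μ : Measure X)) := by
  set C := Metric.diam (Set.univ : Set X) with hC
  apply MeasureTheory.continuous_of_dominated (bound := fun _ => C ^ 2)
  · intro y
    exact ((continuous_const.dist continuous_id).pow 2).aestronglyMeasurable
  · intro y
    filter_upwards with x
    rw [Real.norm_eq_abs, abs_of_nonneg (by positivity)]
    have hd : dist y x ≤ C :=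
      Metric.dist_le_diam_of_mem isCompact_univ.isBounded trivial trivial
    exact pow_le_pow_left₀ dist_nonneg hd 2
  · exact integrable_const _
  · filter_upwards with x
    exact (continuous_id.dist continuous_const).pow 2
end aux

/-- If `(X,d,m)` is regular and, for every `ε > 0`, `f ε` is the minimizer of
`F_ε(ν) = ∫∫ d(y,x)² dμ(x) dν(y) + ε·W₂(m,ν)²` over `P(X)`, then every weak-* limit point
`μ₀` of the family `(f ε)` as `ε → 0` satisfies `supp μ₀ ⊆ b(μ)`. -/
theorem clusterPt_support_subset_bary
    {X : Type*} [MetricSpace X] [CompactSpace X]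
    [MeasurableSpace X] [BorelSpace X]
    (m : ProbabilityMeasure X) (hreg : Regular m) (μ : ProbabilityMeasure X)
    (f : ℝ → ProbabilityMeasure X)
    (hf : ∀ ε : ℝ, 0 < ε → ∀ ρ : ProbabilityMeasure X,
      (∫ y, (∫ x, dist y x ^ 2 ∂(μ : Measure X)) ∂(f ε : Measure X)) + ε * W2sq m (f ε) ≤
      (∫ y, (∫ x, dist y x ^ 2 ∂(μ : Measure X)) ∂(ρ : Measure X)) + ε * W2sq m ρ)
    (μ₀ : ProbabilityMeasure X)
    (hμ₀ : MapClusterPt μ₀ (nhdsWithin (0 : ℝ) (Set.Ioi 0)) f) :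
    mSupport μ₀ ⊆ bary μ := by
  classical
  set g : X → ℝ := fun y => ∫ x, dist y x ^ 2 ∂(μ : Measure X) with hg
  have hgc : Continuous g := g_continuous μ
  have hgnn : ∀ y, 0 ≤ g y := fun y => integral_nonneg fun x => by positivity
  set gb : BoundedContinuousFunction X ℝ := BoundedContinuousFunction.mkOfCompact ⟨g, hgc⟩
  -- W2sq is nonneg
  have hW2nn : ∀ ν : ProbabilityMeasure X, 0 ≤ W2sq m ν := by
    intro ν
    apply Real.sInf_nonneg
    rintro c ⟨γ, -, rfl⟩
    exact integral_nonneg fun p => by positivity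
  -- ultrafilter
  obtain ⟨U, hUle, hUtend⟩ := mapClusterPt_iff_ultrafilter.mp hμ₀
  have key : ∀ z : X, ∫ y, g y ∂(μ₀ : Measure X) ≤ g z := by
    intro z
    set δz : ProbabilityMeasure X := ⟨Measure.dirac z, inferInstance⟩ with hδz
    set C := W2sq m δz with hCdef
    have hIoi : Set.Ioi (0:ℝ) ∈ (U : Filter ℝ) :=
      hUle self_mem_nhdsWithin
    have hineq : ∀ᶠ ε in (U : Filter ℝ), (∫ y, g y ∂(f ε : Measure X)) ≤ g z + ε * C := by
      filter_upwards [hIoi] with ε hε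
      have h1 := hf ε hε δz
      have h2 : (∫ y, g y ∂(δz : Measure X)) = g z := by
        have : (δz : Measure X) = Measure.dirac z := rfl
        rw [this, integral_dirac]
      have h3 : 0 ≤ ε * W2sq m (f ε) := mul_nonneg hε.le (hW2nn _)
      nlinarith [h1, h2, h3]
    have htend1 : Tendsto (fun ε => ∫ y, g y ∂(f ε : Measure X)) (U : Filter ℝ)
        (𝓝 (∫ y, g y ∂(μ₀ : Measure X))) := by
      have := ProbabilityMeasure.tendsto_iff_forall_integral_tendsto.mp hUtend gb
      exact this
    have htend2 : Tendsto (fun ε : ℝ => g z + ε * C) (U : Filter ℝ) (𝓝 (g z + 0 * C)) := by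
      have hU0 : Tendsto (fun ε : ℝ => ε) (U : Filter ℝ) (𝓝 0) :=
        (tendsto_id.mono_left (hUle.trans nhdsWithin_le_nhds))
      exact tendsto_const_nhds.add (hU0.mul tendsto_const_nhds)
    have := le_of_tendsto_of_tendsto htend1 htend2 hineq
    simpa using this
  -- now the support argument
  intro y₀ hy₀ z
  have hXne : Nonempty X := ⟨y₀⟩
  -- ∫ x, dist x y ^ 2 = g y
  have hswap : ∀ y : X, (∫ x, dist x y ^ 2 ∂(μ : Measure X)) = g y := by
    intro y; simp [hg, dist_comm]
  rw [hswap y₀, hswap z]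
  by_contra hcon
  push_neg at hcon
  set I : ℝ := ⨅ y : X, g y with hI
  have hbdd : BddBelow (Set.range g) := ⟨0, by rintro _ ⟨y, rfl⟩; exact hgnn y⟩
  have hIle : ∀ y, I ≤ g y := fun y => ciInf_le hbdd y
  have hint_le : ∫ y, g y ∂(μ₀ : Measure X) ≤ I := le_ciInf key
  have hgint : Integrable g (μ₀ : Measure X) := by
    have := gb.integrable (μ := (μ₀ : Measure X))
    exact this
  set h : X → ℝ := fun y => g y - I with hh
  have hhint : Integrable h (μ₀ : Measure X) := hgint.sub (integrable_const I)
  have hint0 : ∫ y, h y ∂(μ₀ : Measure X) = 0 := by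
    have h1 : ∫ y, h y ∂(μ₀ : Measure X) = (∫ y, g y ∂(μ₀ : Measure X)) - I := by
      rw [integral_sub hgint (integrable_const I)]
      simp
    have h2 : 0 ≤ ∫ y, h y ∂(μ₀ : Measure X) :=
      integral_nonneg fun y => sub_nonneg.mpr (hIle y)
    linarith
  have hae : h =ᵐ[(μ₀ : Measure X)] 0 :=
    (integral_eq_zero_iff_of_nonneg (fun y => sub_nonneg.mpr (hIle y)) hhint).mp hint0
  have hnull : (μ₀ : Measure X) {y | h y ≠ 0} = 0 := ae_iff.mp hae
  set V : Set X := h ⁻¹' Set.Ioi 0 with hV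
  have hVopen : IsOpen V := (isOpen_Ioi).preimage (hgc.sub continuous_const)
  have hy₀V : y₀ ∈ V := by
    have : I ≤ g z := hIle z
    simp only [hV, Set.mem_preimage, Set.mem_Ioi, hh]
    linarith
  have hVnull : (μ₀ : Measure X) V = 0 :=
    measure_mono_null (fun y hy => ne_of_gt hy) hnull
  exact hy₀ V hVopen hy₀V hVnull
end

section
/- Let (X,d) be a compact metric space with a fixed reference probability measure m, and assume (X,d,m) is regular: every coupling γ between m and any ν ∈ P(X) achieving the infimum defining W₂(m,ν) is of the form γ = (Id,T)_# m for some measurable map T : X → X. For μ ∈ P(X), let B(μ) be the unique minimizer of ν ↦ W₂(ν,m) among all ν ∈ P(X) with supp ν ⊆ b(μ). Then var(B(μ)) ≤ var(μ), where var(λ) := min_{y ∈ X} ∫_X d(x,y)² dλ(x). -/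
open MeasureTheory Filter

section Aux

variable {X : Type*} [MetricSpace X] [MeasurableSpace X] [BorelSpace X]

lemma compl_mSupport_null [SecondCountableTopology X]
    (ν : ProbabilityMeasure X) : (ν : Measure X) (mSupport ν)ᶜ = 0 := by
  obtain ⟨b, hbc, -, hbb⟩ := TopologicalSpace.exists_countable_basis X
  have hsub : (mSupport ν)ᶜ ⊆ ⋃₀ {U ∈ b | (ν : Measure X) U = 0} := by
    intro x hx
    simp only [mSupport, Set.mem_compl_iff, Set.mem_setOf_eq, not_forall] at hx
    obtain ⟨U, hUo, hxU, hU0⟩ := hx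
    rw [not_ne_iff] at hU0
    obtain ⟨V, hVb, hxV, hVU⟩ := hbb.exists_subset_of_mem_open hxU hUo
    exact ⟨V, ⟨hVb, le_antisymm (hU0 ▸ measure_mono hVU) zero_le⟩, hxV⟩
  refine measure_mono_null hsub ?_
  rw [measure_sUnion_null_iff (hbc.mono (Set.sep_subset _ _))]
  exact fun s hs => hs.2

lemma integrable_dist_sq [CompactSpace X] (ρ : ProbabilityMeasure X) (y : X) :
    Integrable (fun x => dist x y ^ 2) (ρ : Measure X) := by
  have hc : Continuous fun x : X => dist x y ^ 2 := (continuous_dist.comp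
    (continuous_id.prodMk continuous_const)).pow 2
  exact hc.integrable_of_hasCompactSupport (isClosed_tsupport _).isCompact

end Aux

/-- Variance reduction: if `(X,d,m)` is regular and `B` assigns to each `ρ ∈ P(X)` the
unique minimizer of `ν ↦ W₂(ν,m)` among all `ν` with `supp ν ⊆ b(ρ)`, then
`var(B(μ)) ≤ var(μ)`. -/
theorem variance_reduction
    {X : Type*} [MetricSpace X] [CompactSpace X]
    [MeasurableSpace X] [BorelSpace X]
    (m : ProbabilityMeasure X) (hreg : Regular m)
    (B : ProbabilityMeasure X → ProbabilityMeasure X)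
    (hB : ∀ ρ : ProbabilityMeasure X, mSupport (B ρ) ⊆ bary ρ ∧
      ∀ ν : ProbabilityMeasure X, mSupport ν ⊆ bary ρ → W2 (B ρ) m ≤ W2 ν m)
    (μ : ProbabilityMeasure X) :
    mvar (B μ) ≤ mvar μ := by
  have hXne : Nonempty X := (μ : Measure X).nonempty_of_neZero
  set ν := B μ with hν
  have hsupp : mSupport ν ⊆ bary μ := (hB μ).1
  -- the doubled integrand is integrable on the product
  have hcont : Continuous fun p : X × X => dist p.2 p.1 ^ 2 :=
    (continuous_dist.comp (continuous_snd.prodMk continuous_fst)).pow 2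
  have hint : Integrable (Function.uncurry fun z y : X => dist y z ^ 2)
      ((μ : Measure X).prod (ν : Measure X)) := by
    have : (Function.uncurry fun z y : X => dist y z ^ 2) =
        fun p : X × X => dist p.2 p.1 ^ 2 := rfl
    rw [this]
    exact hcont.integrable_of_hasCompactSupport (isClosed_tsupport _).isCompact
  -- lower bound for each inner integral
  have hbdd : ∀ ρ : ProbabilityMeasure X,
      BddBelow (Set.range fun y : X => ∫ x, dist x y ^ 2 ∂(ρ : Measure X)) := by
    intro ρ
    refine ⟨0, ?_⟩
    rintro c ⟨y, rfl⟩
    exact integral_nonneg fun x => sq_nonneg _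
  -- step 1 : mvar ν ≤ ∫ z, ∫ y, dist y z ^ 2 ∂ν ∂μ
  have h1 : mvar ν ≤ ∫ z, ∫ y, dist y z ^ 2 ∂(ν : Measure X) ∂(μ : Measure X) := by
    have hle : ∀ z : X, mvar ν ≤ ∫ y, dist y z ^ 2 ∂(ν : Measure X) := fun z =>
      ciInf_le (hbdd ν) z
    calc mvar ν = ∫ _, mvar ν ∂(μ : Measure X) := by simp
    _ ≤ _ := integral_mono (integrable_const _) hint.integral_prod_left
        fun z => hle z
  -- step 2 : Fubini
  have h2 : ∫ z, ∫ y, dist y z ^ 2 ∂(ν : Measure X) ∂(μ : Measure X)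
      = ∫ y, ∫ z, dist y z ^ 2 ∂(μ : Measure X) ∂(ν : Measure X) :=
    integral_integral_swap hint
  -- step 3 : for ν-a.e. y the inner integral equals mvar μ
  have h3 : ∀ᵐ y ∂(ν : Measure X),
      (∫ z, dist y z ^ 2 ∂(μ : Measure X)) = mvar μ := by
    have hnull := compl_mSupport_null ν
    filter_upwards [measure_eq_zero_iff_ae_notMem.mp hnull] with y hy
    have hyb : y ∈ bary μ := hsupp (not_not.mp hy)
    have heq : (∫ z, dist y z ^ 2 ∂(μ : Measure X))
        = ∫ z, dist z y ^ 2 ∂(μ : Measure X) := by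
      simp_rw [dist_comm]
    rw [heq]
    exact le_antisymm (le_ciInf fun z => hyb z) (ciInf_le (hbdd μ) y)
  have h4 : ∫ y, ∫ z, dist y z ^ 2 ∂(μ : Measure X) ∂(ν : Measure X) = mvar μ := by
    rw [integral_congr_ae h3]
    simp
  linarith [h1, h2.symm ▸ h1]
end

section
/- Let K be a nonempty closed subset of Euclidean space ℝⁿ. Then for Lebesgue-almost every x ∈ ℝⁿ, the set of minimizers of y ↦ |x − y|² over y ∈ K contains exactly one point; that is, x has a unique nearest point in K. -/
open MeasureTheory Metric Set RealInnerProductSpace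

lemma nearest_fderiv (n : ℕ) (K : Set (EuclideanSpace ℝ (Fin n)))
    (x y : EuclideanSpace ℝ (Fin n))
    (hx : DifferentiableAt ℝ (fun z => infDist z K) x)
    (hyK : y ∈ K) (hyd : dist x y = infDist x K) :
    (fderiv ℝ (fun z => infDist z K) x) (y - x) = -infDist x K := by
  set f : EuclideanSpace ℝ (Fin n) → ℝ := fun z => infDist z K with hf
  set r : ℝ := infDist x K with hr
  have hr0 : 0 ≤ r := infDist_nonneg
  have hnorm : ‖y - x‖ = r := by rw [← hyd, dist_comm, dist_eq_norm]
  set c : ℝ → EuclideanSpace ℝ (Fin n) := fun t => x + t • (y - x) with hc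
  have hc0 : c 0 = x := by simp [hc]
  have hcder : HasDerivAt c (y - x) 0 := by
    simpa [hc] using (((hasDerivAt_id (0:ℝ)).smul_const (y - x)).const_add x)
  have hfd : HasFDerivAt f (fderiv ℝ f x) (c 0) := hc0 ▸ hx.hasFDerivAt
  have hh : HasDerivAt (f ∘ c) ((fderiv ℝ f x) (y - x)) 0 :=
    hfd.comp_hasDerivAt 0 hcder
  have hlip : LipschitzWith 1 f := lipschitz_infDist_pt K
  have heq : ∀ t ∈ Set.Icc (0:ℝ) 1, (f ∘ c) t = r - t * r := by
    intro t ht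
    have h1 : (f ∘ c) t ≤ r - t * r := by
      have hle := infDist_le_dist_of_mem (x := c t) hyK
      have hdist : dist (c t) y = (1 - t) * r := by
        rw [dist_eq_norm]
        have hsub : c t - y = (t - 1) • (y - x) := by
          simp only [hc]; module
        rw [hsub, norm_smul, hnorm, Real.norm_eq_abs,
          abs_of_nonpos (by linarith [ht.2])]
        ring
      calc (f ∘ c) t ≤ dist (c t) y := hle
        _ = (1 - t) * r := hdist
        _ = r - t * r := by ring
    have h2 : r - t * r ≤ (f ∘ c) t := by
      have hd : dist (f x) (f (c t)) ≤ dist x (c t) := by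
        simpa using hlip.dist_le_mul x (c t)
      have hdx : dist x (c t) = t * r := by
        rw [dist_eq_norm]
        have hsub : x - c t = (-t) • (y - x) := by
          simp only [hc]; module
        rw [hsub, norm_smul, hnorm, Real.norm_eq_abs, abs_neg,
          abs_of_nonneg ht.1]
      have habs := (abs_le.1 (by rwa [Real.dist_eq] at hd)).2
      have hfx : f x = r := rfl
      simp only [Function.comp] at *
      linarith [hdx ▸ habs]
    linarith
  have hright : HasDerivWithinAt (f ∘ c) ((fderiv ℝ f x) (y - x)) (Set.Ioi 0) 0 :=
    hh.hasDerivWithinAt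
  have hg : HasDerivWithinAt (fun t : ℝ => r - t * r) (-r) (Set.Ioi 0) 0 := by
    have h' : HasDerivAt (fun t : ℝ => r - t * r) (-r) 0 := by
      simpa using ((hasDerivAt_id (0:ℝ)).mul_const r).const_sub r
    exact h'.hasDerivWithinAt
  have hcongr : HasDerivWithinAt (fun t : ℝ => r - t * r)
      ((fderiv ℝ f x) (y - x)) (Set.Ioi 0) 0 := by
    refine hright.congr_of_eventuallyEq ?_ (by simp [hc0, hf, hr])
    filter_upwards [Ioo_mem_nhdsGT_of_mem (by simp : (0:ℝ) ∈ Set.Ico 0 1)] with t ht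
    exact (heq t ⟨le_of_lt ht.1, le_of_lt ht.2⟩).symm
  exact ((uniqueDiffWithinAt_Ioi (0:ℝ)).eq_deriv _ hcongr hg)


/-- For a nonempty closed set `K ⊆ ℝⁿ`, Lebesgue-almost every `x ∈ ℝⁿ` has a unique
nearest point in `K`, i.e. the set of minimizers of `y ↦ ‖x - y‖²` over `K` is a
singleton. -/
theorem ae_existsUnique_nearest_point
    (n : ℕ) (K : Set (EuclideanSpace ℝ (Fin n)))
    (hK : IsClosed K) (hKne : K.Nonempty) :
    ∀ᵐ x ∂(volume : Measure (EuclideanSpace ℝ (Fin n))),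
      ∃! y : EuclideanSpace ℝ (Fin n),
        y ∈ K ∧ ∀ z ∈ K, ‖x - y‖ ^ 2 ≤ ‖x - z‖ ^ 2 := by
  have hlip : LipschitzWith 1 (fun z : EuclideanSpace ℝ (Fin n) => infDist z K) :=
    lipschitz_infDist_pt K
  filter_upwards [hlip.ae_differentiableAt] with x hx
  obtain ⟨y, hyK, hyd⟩ := hK.exists_infDist_eq_dist hKne x
  have hmin : ∀ z ∈ K, ‖x - y‖ ^ 2 ≤ ‖x - z‖ ^ 2 := by
    intro z hz
    have h1 : dist x y ≤ dist x z := hyd ▸ infDist_le_dist_of_mem hz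
    rw [dist_eq_norm, dist_eq_norm] at h1
    exact pow_le_pow_left₀ (norm_nonneg _) h1 2
  refine ⟨y, ⟨hyK, hmin⟩, ?_⟩
  rintro y' ⟨hy'K, hy'min⟩
  have hy'd : dist x y' = infDist x K := by
    refine le_antisymm ?_ (infDist_le_dist_of_mem hy'K)
    rw [hyd, dist_eq_norm, dist_eq_norm]
    exact (abs_le_of_sq_le_sq' (hy'min y hyK) (norm_nonneg _)).2.trans
      (le_abs_self _) |>.trans (by rw [abs_of_nonneg (norm_nonneg _)])
  have hyd' : dist x y = infDist x K := hyd.symm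
  by_cases hr0 : infDist x K = 0
  · have h1 : y' = x := by
      have h : dist x y' = 0 := by rw [hy'd, hr0]
      rw [dist_comm] at h; exact dist_eq_zero.1 h
    have h2 : y = x := by
      have h : dist x y = 0 := by rw [hyd', hr0]
      rw [dist_comm] at h; exact dist_eq_zero.1 h
    rw [h1, h2]
  · have hrpos : 0 < infDist x K := lt_of_le_of_ne infDist_nonneg (Ne.symm hr0)
    set L := fderiv ℝ (fun z : EuclideanSpace ℝ (Fin n) => infDist z K) x with hL
    have hL1 : L (y - x) = -infDist x K := nearest_fderiv n K x y hx hyK hyd'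
    have hL2 : L (y' - x) = -infDist x K := nearest_fderiv n K x y' hx hy'K hy'd
    have hLnorm : ‖L‖ ≤ 1 := by
      simpa using norm_fderiv_le_of_lipschitz ℝ hlip (x₀ := x)
    set a := y - x with ha
    set b := y' - x with hb
    set r := infDist x K with hr
    have hna : ‖a‖ = r := by rw [ha, ← hyd', dist_comm, dist_eq_norm]
    have hnb : ‖b‖ = r := by rw [hb, ← hy'd, dist_comm, dist_eq_norm]
    have hab : ‖a + b‖ = 2 * r := by
      refine le_antisymm ((norm_add_le a b).trans_eq (by rw [hna, hnb]; ring)) ?_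
      have h1 : |L (a + b)| ≤ ‖a + b‖ := by
        calc |L (a + b)| = ‖L (a + b)‖ := rfl
          _ ≤ ‖L‖ * ‖a + b‖ := L.le_opNorm _
          _ ≤ 1 * ‖a + b‖ := mul_le_mul_of_nonneg_right hLnorm (norm_nonneg _)
          _ = ‖a + b‖ := one_mul _
      have h2 : L (a + b) = -(2 * r) := by rw [map_add, hL1, hL2]; ring
      rw [h2, abs_neg, abs_of_nonneg (by positivity)] at h1
      exact h1
    have hinner : ⟪a, b⟫ = ‖a‖ * ‖b‖ := by
      have hsq := congrArg (fun t : ℝ => t ^ 2) hab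
      rw [← real_inner_self_eq_norm_sq, real_inner_add_add_self,
        real_inner_self_eq_norm_sq, real_inner_self_eq_norm_sq, hna, hnb] at hsq
      rw [hna, hnb]
      nlinarith [hsq]
    have hkey := inner_eq_norm_mul_iff_real.1 hinner
    rw [hna, hnb] at hkey
    have hab' : a = b := smul_right_injective _ hr0 hkey
    rw [ha, hb] at hab'
    have := sub_left_injective hab'
    exact this.symm
end

section
/- Let K ⊆ ℝⁿ be a nonempty compact set and let m be a compactly supported probability measure on ℝⁿ that is absolutely continuous with respect to Lebesgue measure. Let T : ℝⁿ → K be a map sending m-almost every x to its (m-a.e. unique) nearest point in K. Then the pushforward T_# m minimizes ν ↦ W₂(m, ν) over all probability measures ν on ℝⁿ with supp ν ⊆ K: namely W₂(m, T_# m)² = ∫ |x − T(x)|² dm(x) ≤ W₂(m, ν)² for every such ν, and in particular (Id, T)_# m is an optimal coupling between m and T_# m. -/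
open MeasureTheory

/-- `γ` is a coupling of `μ` and `ν`: a measure on `E × E` with marginals `μ` and `ν`. -/
def IsCouplingE {E : Type*} [MeasurableSpace E]
    (γ : Measure (E × E)) (μ ν : Measure E) : Prop :=
  γ.map Prod.fst = μ ∧ γ.map Prod.snd = ν

/-- The squared 2-Wasserstein distance `W₂(μ,ν)²` on a normed space. -/
noncomputable def W2sqE {E : Type*} [NormedAddCommGroup E] [MeasurableSpace E]
    (μ ν : Measure E) : ℝ :=
  sInf {c : ℝ | ∃ γ : Measure (E × E), IsCouplingE γ μ ν ∧
    c = ∫ p, ‖p.1 - p.2‖ ^ 2 ∂γ}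

/-- The support of a measure: the set of points all of whose open neighbourhoods
have positive measure. -/
def mSupportE {E : Type*} [TopologicalSpace E] [MeasurableSpace E]
    (μ : Measure E) : Set E :=
  {x : E | ∀ U : Set E, IsOpen U → x ∈ U → μ U ≠ 0}

section Aux

variable {n : ℕ}

local notation "En" => EuclideanSpace ℝ (Fin n)

lemma support_null (ν : Measure En) (K : Set En) (hsupp : mSupportE ν ⊆ K) :
    ν Kᶜ = 0 := by
  apply measure_null_of_locally_null
  intro x hx
  have : x ∉ mSupportE ν := fun h => hx (hsupp h)
  simp only [mSupportE, Set.mem_setOf_eq, not_forall] at this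
  obtain ⟨U, hU, hxU, hνU⟩ := this
  push_neg at hνU
  exact ⟨U, mem_nhdsWithin_of_mem_nhds (hU.mem_nhds hxU), hνU⟩

lemma integrable_nearest (K : Set En) (hKne : K.Nonempty)
    (m : Measure En) [IsProbabilityMeasure m]
    (C : Set En) (hC : IsCompact C) (hmC : m Cᶜ = 0)
    (T : En → En) (hT_meas : Measurable T)
    (hT : ∀ᵐ x ∂m, ∀ z ∈ K, ‖x - T x‖ ^ 2 ≤ ‖x - z‖ ^ 2) :
    Integrable (fun x => ‖x - T x‖ ^ 2) m := by
  obtain ⟨z₀, hz₀⟩ := hKne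
  obtain ⟨R, hR⟩ := isBounded_iff_forall_norm_le.mp hC.isBounded
  have hmC' : ∀ᵐ x ∂m, x ∈ C := by
    rw [ae_iff]; exact hmC
  refine Integrable.mono' (integrable_const ((R + ‖z₀‖) ^ 2))
    ((measurable_id.sub hT_meas).norm.pow_const 2).aestronglyMeasurable ?_
  filter_upwards [hT, hmC'] with x hx hxC
  have h1 : ‖x - T x‖ ^ 2 ≤ ‖x - z₀‖ ^ 2 := hx z₀ hz₀
  have h2 : ‖x - z₀‖ ≤ R + ‖z₀‖ :=
    (norm_sub_le _ _).trans (add_le_add (hR x hxC) le_rfl)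
  have h3 : ‖x - z₀‖ ^ 2 ≤ (R + ‖z₀‖) ^ 2 := by
    have := pow_le_pow_left₀ (norm_nonneg (x - z₀)) h2 2
    simpa using this
  rw [Real.norm_eq_abs, abs_of_nonneg (by positivity)]
  exact h1.trans h3

lemma cost_lb (K : Set En) (hK : IsCompact K) (hKne : K.Nonempty)
    (m : Measure En) [IsProbabilityMeasure m]
    (C : Set En) (hC : IsCompact C) (hmC : m Cᶜ = 0)
    (T : En → En) (hT_meas : Measurable T)
    (hT : ∀ᵐ x ∂m, ∀ z ∈ K, ‖x - T x‖ ^ 2 ≤ ‖x - z‖ ^ 2)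
    (ν : Measure En) (hν : ν Kᶜ = 0)
    (γ : Measure (En × En)) (hγ : IsCouplingE γ m ν) :
    ∫ x, ‖x - T x‖ ^ 2 ∂m ≤ ∫ p, ‖p.1 - p.2‖ ^ 2 ∂γ := by
  obtain ⟨hγ1, hγ2⟩ := hγ
  have hγuniv : γ Set.univ = 1 := by
    have : (γ.map Prod.fst) Set.univ = γ (Prod.fst ⁻¹' Set.univ) :=
      Measure.map_apply measurable_fst MeasurableSet.univ
    simp only [Set.preimage_univ] at this
    rw [← this, hγ1]; exact measure_univ
  haveI : IsProbabilityMeasure γ := ⟨hγuniv⟩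
  -- a.e. facts
  have hsnd : ∀ᵐ p ∂γ, p.2 ∈ K := by
    rw [ae_iff]
    have : {p : En × En | ¬ p.2 ∈ K} = Prod.snd ⁻¹' Kᶜ := rfl
    rw [this, ← Measure.map_apply measurable_snd hK.isClosed.measurableSet.compl, hγ2]
    exact hν
  have hfstC : ∀ᵐ p ∂γ, p.1 ∈ C := by
    rw [ae_iff]
    have h0 : {p : En × En | ¬ p.1 ∈ C} = Prod.fst ⁻¹' Cᶜ := rfl
    rw [h0, ← Measure.map_apply measurable_fst hC.isClosed.measurableSet.compl, hγ1]
    exact hmC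
  have hfstT : ∀ᵐ p ∂γ, ∀ z ∈ K, ‖p.1 - T p.1‖ ^ 2 ≤ ‖p.1 - z‖ ^ 2 := by
    obtain ⟨u, hu_sub, hu_meas, hu0⟩ := exists_measurable_superset_of_null (ae_iff.mp hT)
    have : γ (Prod.fst ⁻¹' u) = 0 := by
      rw [← Measure.map_apply measurable_fst hu_meas, hγ1]; exact hu0
    rw [ae_iff]
    refine measure_mono_null ?_ this
    intro p hp
    exact hu_sub hp
  -- integrability
  obtain ⟨RC, hRC⟩ := isBounded_iff_forall_norm_le.mp hC.isBounded
  obtain ⟨RK, hRK⟩ := isBounded_iff_forall_norm_le.mp hK.isBounded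
  have hcost_int : Integrable (fun p : En × En => ‖p.1 - p.2‖ ^ 2) γ := by
    refine Integrable.mono' (integrable_const ((RC + RK) ^ 2))
      (((continuous_fst.sub continuous_snd).norm.pow 2).aestronglyMeasurable) ?_
    filter_upwards [hsnd, hfstC] with p hp2 hp1
    have h2 : ‖p.1 - p.2‖ ≤ RC + RK :=
      (norm_sub_le _ _).trans (add_le_add (hRC _ hp1) (hRK _ hp2))
    have h3 : ‖p.1 - p.2‖ ^ 2 ≤ (RC + RK) ^ 2 := by
      have := pow_le_pow_left₀ (norm_nonneg (p.1 - p.2)) h2 2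
      simpa using this
    rw [Real.norm_eq_abs, abs_of_nonneg (by positivity)]
    exact h3
  have hf_int : Integrable (fun x => ‖x - T x‖ ^ 2) m :=
    integrable_nearest K hKne m C hC hmC T hT_meas hT
  have hg_int : Integrable (fun p : En × En => ‖p.1 - T p.1‖ ^ 2) γ := by
    rw [← hγ1] at hf_int
    exact (integrable_map_measure
      ((measurable_id.sub hT_meas).norm.pow_const 2).aestronglyMeasurable
      measurable_fst.aemeasurable).mp hf_int
  have hchg : ∫ x, ‖x - T x‖ ^ 2 ∂m = ∫ p, ‖p.1 - T p.1‖ ^ 2 ∂γ := by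
    rw [← hγ1]
    exact integral_map measurable_fst.aemeasurable
      ((measurable_id.sub hT_meas).norm.pow_const 2).aestronglyMeasurable
  rw [hchg]
  refine integral_mono_ae hg_int hcost_int ?_
  filter_upwards [hsnd, hfstT] with p hp2 hp1
  exact hp1 p.2 hp2

end Aux

/-- Let `K ⊆ ℝⁿ` be nonempty and compact, `m` a compactly supported probability measure on
`ℝⁿ`, absolutely continuous with respect to Lebesgue measure, and `T` a (measurable) map
sending `m`-a.e. `x` to its nearest point in `K`.  Then `T_# m` minimizes `ν ↦ W₂(m,ν)`
over all probability measures `ν` supported in `K`: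
`W₂(m, T_# m)² = ∫ ‖x − T(x)‖² dm(x) ≤ W₂(m,ν)²` for every such `ν`, and `(Id,T)_# m` is
an optimal coupling between `m` and `T_# m`. -/
theorem pushforward_nearest_point_optimal
    (n : ℕ) (K : Set (EuclideanSpace ℝ (Fin n)))
    (hK : IsCompact K) (hKne : K.Nonempty)
    (m : Measure (EuclideanSpace ℝ (Fin n))) [IsProbabilityMeasure m]
    (hm_compact : ∃ C : Set (EuclideanSpace ℝ (Fin n)), IsCompact C ∧ m Cᶜ = 0)
    (hm_ac : m ≪ (volume : Measure (EuclideanSpace ℝ (Fin n))))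
    (T : EuclideanSpace ℝ (Fin n) → EuclideanSpace ℝ (Fin n))
    (hT_meas : Measurable T) (hT_mem : ∀ x, T x ∈ K)
    (hT : ∀ᵐ x ∂m, ∀ z ∈ K, ‖x - T x‖ ^ 2 ≤ ‖x - z‖ ^ 2) :
    W2sqE m (m.map T) = ∫ x, ‖x - T x‖ ^ 2 ∂m ∧
    (∀ ν : Measure (EuclideanSpace ℝ (Fin n)), IsProbabilityMeasure ν →
      mSupportE ν ⊆ K → W2sqE m (m.map T) ≤ W2sqE m ν) ∧
    IsCouplingE (m.map (fun x => (x, T x))) m (m.map T) ∧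
    (∫ p, ‖p.1 - p.2‖ ^ 2 ∂(m.map (fun x => (x, T x)))) = W2sqE m (m.map T) := by
  obtain ⟨C, hC, hmC⟩ := hm_compact
  set c₀ : ℝ := ∫ x, ‖x - T x‖ ^ 2 ∂m with hc₀
  have hpair : Measurable (fun x : EuclideanSpace ℝ (Fin n) => (x, T x)) :=
    measurable_id.prodMk hT_meas
  -- γ₀ coupling
  have hcoupling : IsCouplingE (m.map (fun x => (x, T x))) m (m.map T) := by
    constructor
    · rw [Measure.map_map measurable_fst hpair]
      have h : (Prod.fst ∘ fun x : EuclideanSpace ℝ (Fin n) => (x, T x)) = id := rfl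
      rw [h, Measure.map_id]
    · rw [Measure.map_map measurable_snd hpair]
      rfl
  -- cost of γ₀
  have hcost : (∫ p, ‖p.1 - p.2‖ ^ 2 ∂(m.map (fun x => (x, T x)))) = c₀ := by
    rw [integral_map hpair.aemeasurable (f := fun p : EuclideanSpace ℝ (Fin n) × EuclideanSpace ℝ (Fin n) => ‖p.1 - p.2‖ ^ 2)
      (((continuous_fst.sub continuous_snd).norm.pow 2).aestronglyMeasurable)]
  haveI : IsProbabilityMeasure (m.map T) := Measure.isProbabilityMeasure_map hT_meas.aemeasurable
  have hνT : (m.map T) Kᶜ = 0 := by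
    rw [Measure.map_apply hT_meas hK.isClosed.measurableSet.compl]
    have : T ⁻¹' Kᶜ = ∅ := by
      ext x; simp [hT_mem x]
    simp [this]
  -- lower bound for any coupling with ν supported in K
  have hlb : ∀ (ν : Measure (EuclideanSpace ℝ (Fin n))), ν Kᶜ = 0 →
      ∀ c ∈ {c : ℝ | ∃ γ, IsCouplingE γ m ν ∧ c = ∫ p, ‖p.1 - p.2‖ ^ 2 ∂γ}, c₀ ≤ c := by
    rintro ν hν c ⟨γ, hγ, rfl⟩
    exact cost_lb K hK hKne m C hC hmC T hT_meas hT ν hν γ hγ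
  have hmem : c₀ ∈ {c : ℝ | ∃ γ, IsCouplingE γ m (m.map T) ∧
      c = ∫ p, ‖p.1 - p.2‖ ^ 2 ∂γ} :=
    ⟨m.map (fun x => (x, T x)), hcoupling, hcost.symm⟩
  have hW2 : W2sqE m (m.map T) = c₀ := by
    apply le_antisymm
    · exact csInf_le ⟨c₀, hlb _ hνT⟩ hmem
    · exact le_csInf ⟨c₀, hmem⟩ (hlb _ hνT)
  refine ⟨hW2, ?_, hcoupling, hcost.trans hW2.symm⟩
  intro ν hνprob hνsupp
  have hνK : ν Kᶜ = 0 := support_null ν K hνsupp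
  rw [hW2]
  unfold W2sqE
  apply le_csInf
  · refine ⟨∫ p, ‖p.1 - p.2‖ ^ 2 ∂(m.prod ν), m.prod ν, ⟨?_, ?_⟩, rfl⟩
    · rw [Measure.map_fst_prod]; simp
    · rw [Measure.map_snd_prod]; simp
  · exact hlb ν hνK
end

section
/- Let X = ℝ/ℤ be the circle with the quotient metric d(x,y) = min_{k ∈ ℤ} |x̃ − ỹ + k| for lifts x̃, ỹ. Let N be an odd positive integer and let x_i = i/N (mod 1) for i = 0, 1, ..., N−1 be N evenly spaced points. Then the set of minimizers over y ∈ X of the function y ↦ Σ_{i=0}^{N−1} d(y, x_i)² is exactly {x_0, x_1, ..., x_{N−1}}. -/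
open Finset

noncomputable def gg (N : ℕ) (y : AddCircle (1:ℝ)) : ℝ :=
  ∑ i ∈ Finset.range N, dist y (((i : ℝ) / (N : ℝ) : ℝ) : AddCircle (1 : ℝ)) ^ 2

lemma coe_int_zero (k : ℤ) : (((k:ℝ) : ℝ) : AddCircle (1:ℝ)) = 0 := by
  rw [AddCircle.coe_eq_zero_iff]; exact ⟨k, by simp⟩

lemma coe_eq_of (a b : ℝ) (k : ℤ) (h : a = b + k) :
    ((a : ℝ) : AddCircle (1:ℝ)) = (b : AddCircle (1:ℝ)) := by
  subst h
  rw [AddCircle.coe_add, coe_int_zero, add_zero]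

lemma dist_coe (a b : ℝ) :
    dist ((a:ℝ) : AddCircle (1:ℝ)) ((b:ℝ) : AddCircle (1:ℝ)) = |a - b - round (a - b)| := by
  rw [dist_eq_norm, ← AddCircle.coe_sub, AddCircle.norm_eq]
  simp

lemma g_step (N : ℕ) (hNpos : 0 < N) (y : AddCircle (1:ℝ)) :
    gg N (y + ((1/(N:ℝ) : ℝ) : AddCircle (1:ℝ))) = gg N y := by
  unfold gg
  have h : ∀ i : ℕ, dist (y + ((1/(N:ℝ):ℝ):AddCircle (1:ℝ))) (((i:ℝ)/(N:ℝ):ℝ):AddCircle (1:ℝ))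
      = dist y ((((i:ℝ)-1)/(N:ℝ) : ℝ) : AddCircle (1:ℝ)) := by
    intro i
    have e : (((i:ℝ)/(N:ℝ):ℝ):AddCircle (1:ℝ))
        = ((((i:ℝ)-1)/(N:ℝ) : ℝ) : AddCircle (1:ℝ)) + ((1/(N:ℝ):ℝ):AddCircle (1:ℝ)) := by
      rw [← AddCircle.coe_add]
      congr 1
      field_simp
      ring
    rw [e, dist_add_right]
  rw [Finset.sum_congr rfl (fun i _ => by rw [h i])]
  refine Finset.sum_nbij' (i := fun j => if j = 0 then N - 1 else j - 1)
    (j := fun i => if i = N - 1 then 0 else i + 1) ?_ ?_ ?_ ?_ ?_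
  · intro a ha; simp only [Finset.mem_range] at *; split <;> omega
  · intro a ha; simp only [Finset.mem_range] at *; split <;> omega
  · intro a ha; simp only [Finset.mem_range] at ha; split <;> split <;> omega
  · intro a ha; simp only [Finset.mem_range] at ha; split <;> split <;> omega
  · intro a ha
    simp only [Finset.mem_range] at ha
    congr 2
    by_cases h0 : a = 0
    · subst h0
      simp only [if_pos rfl]
      refine coe_eq_of _ _ (-1) ?_
      push_cast [Nat.sub_add_cancel hNpos, Nat.cast_sub (Nat.succ_le_of_lt hNpos)]
      field_simp
      ring
    · rw [if_neg h0]
      congr 1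
      have : (1:ℕ) ≤ a := Nat.one_le_iff_ne_zero.mpr h0
      push_cast [Nat.cast_sub this]
      ring

lemma g_shift (N : ℕ) (hNpos : 0 < N) (k : ℤ) (y : AddCircle (1:ℝ)) :
    gg N (y + (((k:ℝ)/(N:ℝ) : ℝ) : AddCircle (1:ℝ))) = gg N y := by
  induction k using Int.induction_on with
  | zero => simp
  | succ n ih =>
      have e : ((((n:ℤ)+1 : ℤ):ℝ)/(N:ℝ) : ℝ) = ((n:ℤ):ℝ)/(N:ℝ) + 1/(N:ℝ) := by
        push_cast; ring
      rw [e, AddCircle.coe_add, ← add_assoc, g_step N hNpos, ih]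
  | pred n ih =>
      have e : (((-(n:ℤ) : ℤ):ℝ)/(N:ℝ) : ℝ) = ((-(n:ℤ)-1 : ℤ):ℝ)/(N:ℝ) + 1/(N:ℝ) := by
        push_cast; ring
      rw [← ih, e, AddCircle.coe_add, ← add_assoc]
      exact (g_step N hNpos _).symm

lemma g_neg (N : ℕ) (hNpos : 0 < N) (y : AddCircle (1:ℝ)) :
    gg N (-y) = gg N y := by
  unfold gg
  have h : ∀ i : ℕ, dist (-y) (((i:ℝ)/(N:ℝ):ℝ):AddCircle (1:ℝ))
      = dist y ((-(i:ℝ)/(N:ℝ) : ℝ) : AddCircle (1:ℝ)) := by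
    intro i
    have : ((-(i:ℝ)/(N:ℝ) : ℝ) : AddCircle (1:ℝ)) = -(((i:ℝ)/(N:ℝ):ℝ):AddCircle (1:ℝ)) := by
      rw [← AddCircle.coe_neg, neg_div]
    rw [this]
    conv_lhs => rw [show ((((i:ℝ)/(N:ℝ):ℝ)):AddCircle (1:ℝ)) =
      -(-(((i:ℝ)/(N:ℝ):ℝ):AddCircle (1:ℝ))) from (neg_neg _).symm]
    exact dist_neg_neg _ _
  rw [Finset.sum_congr rfl (fun i _ => by rw [h i])]
  refine Finset.sum_nbij' (i := fun j => if j = 0 then 0 else N - j)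
    (j := fun i => if i = 0 then 0 else N - i) ?_ ?_ ?_ ?_ ?_
  · intro a ha; simp only [Finset.mem_range] at *; split <;> omega
  · intro a ha; simp only [Finset.mem_range] at *; split <;> omega
  · intro a ha; simp only [Finset.mem_range] at ha; split <;> split <;> omega
  · intro a ha; simp only [Finset.mem_range] at ha; split <;> split <;> omega
  · intro a ha
    simp only [Finset.mem_range] at ha
    congr 2
    by_cases h0 : a = 0
    · subst h0; simp
    · rw [if_neg h0]
      refine coe_eq_of _ _ (-1) ?_
      have h1 : a ≤ N := le_of_lt ha
      push_cast [Nat.cast_sub h1]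
      field_simp
      ring

lemma coe_real_zero : ((0:ℝ) : AddCircle (1:ℝ)) = 0 := by
  exact (AddCircle.coe_eq_zero_iff 1).mpr ⟨0, by simp⟩

lemma g_base (N : ℕ) (hN : Odd N) (hNpos : 0 < N) (s : ℝ)
    (h1 : -(1/2) ≤ (N:ℝ)*s) (h2 : (N:ℝ)*s < 1/2) :
    gg N ((s : ℝ) : AddCircle (1:ℝ)) = gg N 0 + (N:ℝ) * s^2 := by
  obtain ⟨m, hm⟩ := hN
  have hNR : (N:ℝ) = 2*(m:ℝ)+1 := by rw [hm]; push_cast; ring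
  have hNpos' : (0:ℝ) < N := by positivity
  set c : ℕ → ℝ := fun i => (i:ℝ)/(N:ℝ) - (if m < i then 1 else 0) with hc
  have key : ∀ u : ℝ, -(1/2) ≤ (N:ℝ)*u → (N:ℝ)*u < 1/2 →
      gg N ((u : ℝ) : AddCircle (1:ℝ)) = ∑ i ∈ Finset.range N, (u - c i)^2 := by
    intro u hu1 hu2
    unfold gg
    refine Finset.sum_congr rfl (fun i hi => ?_)
    simp only [Finset.mem_range] at hi
    rw [dist_coe]
    by_cases him : m < i
    · have hiN : (i:ℝ) ≤ (N:ℝ) - 1 := by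
        have h' : (i:ℝ) + 1 ≤ (N:ℝ) := by exact_mod_cast hi
        linarith
      have him' : (m:ℝ) + 1 ≤ (i:ℝ) := by exact_mod_cast him
      have hr : round (u - (i:ℝ)/(N:ℝ)) = -1 := by
        have h' : round ((u - (i:ℝ)/(N:ℝ)) + ((1:ℤ):ℝ)) = 0 := by
          rw [round_eq_zero_iff]
          have e : u - (i:ℝ)/(N:ℝ) + ((1:ℤ):ℝ) = ((N:ℝ)*u - i + N)/N := by
            field_simp
            ring
          constructor
          · rw [e, le_div_iff₀ hNpos']
            nlinarith
          · rw [e, div_lt_iff₀ hNpos']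
            nlinarith
        rw [round_add_intCast] at h'
        omega
      rw [hr, hc]
      simp only [if_pos him]
      rw [sq_abs]
      push_cast
      ring_nf
    · push_neg at him
      have him' : (i:ℝ) ≤ (m:ℝ) := by exact_mod_cast him
      have hi0 : (0:ℝ) ≤ (i:ℝ) := Nat.cast_nonneg i
      have hr : round (u - (i:ℝ)/(N:ℝ)) = 0 := by
        rw [round_eq_zero_iff]
        have e : u - (i:ℝ)/(N:ℝ) = ((N:ℝ)*u - i)/N := by
          field_simp
        constructor
        · rw [e, le_div_iff₀ hNpos']
          nlinarith
        · rw [e, div_lt_iff₀ hNpos']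
          nlinarith
      rw [hr, hc]
      simp only [if_neg (not_lt.mpr him)]
      rw [sq_abs]
      push_cast
      ring_nf
  have h0 : gg N 0 = ∑ i ∈ Finset.range N, ((0:ℝ) - c i)^2 := by
    rw [← coe_real_zero]
    refine key 0 (by norm_num) (by norm_num)
  have hs1 : ∑ i ∈ Finset.range N, ((i:ℝ)) = (N:ℝ)*((N:ℝ)-1)/2 := by
    have h' := Finset.sum_range_id_mul_two N
    have h'' : ((∑ i ∈ Finset.range N, i : ℕ) : ℝ) * 2 = (N:ℝ) * ((N:ℝ) - 1) := by
      rw [← Nat.cast_ofNat, ← Nat.cast_mul, h']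
      push_cast [Nat.cast_sub hNpos]
      ring
    push_cast at h''
    linarith
  have hs2 : ∑ i ∈ Finset.range N, (if m < i then (1:ℝ) else 0) = (m:ℝ) := by
    rw [Finset.sum_boole]
    have hf : (Finset.range N).filter (fun i => m < i) = Finset.Ico (m+1) N := by
      ext x
      simp only [Finset.mem_filter, Finset.mem_range, Finset.mem_Ico]
      omega
    rw [hf, Nat.card_Ico]
    congr 1
    omega
  have hsum : ∑ i ∈ Finset.range N, c i = 0 := by
    simp only [hc]
    rw [Finset.sum_sub_distrib, hs2, ← Finset.sum_div, hs1]
    rw [hNR]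
    field_simp
    ring
  rw [key s h1 h2, h0]
  have expand : ∀ i : ℕ, (s - c i)^2 = ((0:ℝ) - c i)^2 + (s^2 - 2*s*(c i)) := by
    intro i; ring
  rw [Finset.sum_congr rfl (fun i _ => expand i), Finset.sum_add_distrib,
    Finset.sum_sub_distrib, Finset.sum_const, Finset.card_range, ← Finset.mul_sum,
    hsum, mul_zero, sub_zero, nsmul_eq_mul]

lemma g_formula (N : ℕ) (hN : Odd N) (hNpos : 0 < N) (z : AddCircle (1:ℝ)) :
    ∃ (k : ℤ) (s : ℝ), (s = 0 → z = (((k:ℝ)/(N:ℝ) : ℝ) : AddCircle (1:ℝ))) ∧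
      gg N z = gg N 0 + (N:ℝ) * s^2 := by
  have hNpos' : (0:ℝ) < N := by positivity
  induction z using QuotientAddGroup.induction_on with
  | H t =>
    set k : ℤ := round ((N:ℝ)*t) with hk
    set s : ℝ := t - (k:ℝ)/(N:ℝ) with hs
    have hNs : (N:ℝ)*s = (N:ℝ)*t - (k:ℝ) := by rw [hs]; field_simp
    have hb := abs_sub_round ((N:ℝ)*t)
    have hb' := abs_le.mp hb
    have hlow : -(1/2) ≤ (N:ℝ)*s := by rw [hNs]; linarith [hb'.1]
    have hup : (N:ℝ)*s < 1/2 := by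
      rw [hNs, hk, round_eq]
      have := Int.lt_floor_add_one ((N:ℝ)*t + 1/2)
      linarith
    have hzdecomp : (QuotientAddGroup.mk t : AddCircle (1:ℝ))
        = ((s : ℝ) : AddCircle (1:ℝ)) + (((k:ℝ)/(N:ℝ) : ℝ) : AddCircle (1:ℝ)) := by
      rw [← AddCircle.coe_add]
      congr 1
      rw [hs]; ring
    refine ⟨k, s, ?_, ?_⟩
    · intro hs0
      rw [hzdecomp, hs0, coe_real_zero, zero_add]
    · rw [hzdecomp, g_shift N hNpos k, g_base N hN hNpos s hlow hup]

/-- On the circle `ℝ/ℤ` with the quotient metric, for an odd number `N` of evenly spaced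
points `x_i = i/N`, the set of minimizers of `y ↦ Σᵢ d(y, x_i)²` is exactly
`{x_0, …, x_{N-1}}`. -/
theorem circle_barycenters_odd
    (N : ℕ) (hN : Odd N) (hNpos : 0 < N) :
    {y : AddCircle (1 : ℝ) | ∀ z : AddCircle (1 : ℝ),
        ∑ i ∈ Finset.range N, dist y (((i : ℝ) / (N : ℝ) : ℝ) : AddCircle (1 : ℝ)) ^ 2 ≤
        ∑ i ∈ Finset.range N, dist z (((i : ℝ) / (N : ℝ) : ℝ) : AddCircle (1 : ℝ)) ^ 2} =
      {y : AddCircle (1 : ℝ) | ∃ i < N,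
        y = (((i : ℝ) / (N : ℝ) : ℝ) : AddCircle (1 : ℝ))} := by
  have hNpos' : (0:ℝ) < N := by positivity
  have hpt : ∀ k : ℤ, gg N ((((k:ℝ)/(N:ℝ) : ℝ)) : AddCircle (1:ℝ)) = gg N 0 := by
    intro k
    have := g_shift N hNpos k 0
    rwa [zero_add] at this
  have hmin : ∀ z : AddCircle (1:ℝ), gg N 0 ≤ gg N z := by
    intro z
    obtain ⟨k, s, -, hval⟩ := g_formula N hN hNpos z
    nlinarith [sq_nonneg s]
  ext y
  simp only [Set.mem_setOf_eq]
  constructor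
  · intro hy
    obtain ⟨k, s, hzero, hval⟩ := g_formula N hN hNpos y
    have hle : gg N y ≤ gg N 0 := by
      have := hy 0
      calc gg N y ≤ gg N ((((0:ℕ):ℝ)/(N:ℝ) : ℝ) : AddCircle (1:ℝ)) := hy _
        _ = gg N 0 := by
            rw [show ((((0:ℕ):ℝ)/(N:ℝ) : ℝ) : AddCircle (1:ℝ)) = 0 by norm_num [coe_real_zero]]
    have hs0 : s = 0 := by
      have hsq : s^2 ≤ 0 := by
        have h' : (N:ℝ)*s^2 ≤ (N:ℝ)*0 := by rw [mul_zero]; linarith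
        exact le_of_mul_le_mul_left h' hNpos'
      have h'' : s ^ 2 = 0 := le_antisymm hsq (sq_nonneg s)
      exact pow_eq_zero_iff two_ne_zero |>.mp h''
    have hy' := hzero hs0
    refine ⟨(k % (N:ℤ)).toNat, ?_, ?_⟩
    · have h1 : k % (N:ℤ) < N := Int.emod_lt_of_pos k (by exact_mod_cast hNpos)
      omega
    · rw [hy']
      have hnn : 0 ≤ k % (N:ℤ) := Int.emod_nonneg k (by positivity)
      refine coe_eq_of _ _ (k / (N:ℤ)) ?_
      have hdecomp : (k:ℝ) = ((k % (N:ℤ) : ℤ):ℝ) + (N:ℝ) * ((k / (N:ℤ) : ℤ):ℝ) := by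
        exact_mod_cast congrArg (Int.cast : ℤ → ℝ) (Int.emod_add_mul_ediv k (N:ℤ)).symm
      rw [show (((k % (N:ℤ)).toNat : ℕ):ℝ) = ((k % (N:ℤ) : ℤ):ℝ) by
        exact_mod_cast congrArg (Int.cast : ℤ → ℝ) (Int.toNat_of_nonneg hnn)]
      field_simp
      linarith [hdecomp]
  · rintro ⟨i, hi, rfl⟩
    intro z
    have h1 : gg N ((((i:ℕ):ℝ)/(N:ℝ) : ℝ) : AddCircle (1:ℝ)) = gg N 0 := by
      have := hpt (i:ℤ)
      rwa [show (((i:ℤ):ℝ)) = ((i:ℕ):ℝ) by push_cast; rfl] at this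
    show gg N ((((i:ℕ):ℝ)/(N:ℝ) : ℝ) : AddCircle (1:ℝ)) ≤ gg N z
    rw [h1]
    exact hmin z
end

section
/- Let X = ℝ/ℤ be the circle with the quotient metric d(x,y) = min_{k ∈ ℤ} |x̃ − ỹ + k| for lifts x̃, ỹ. Let N be an even positive integer and let x_i = i/N (mod 1) for i = 0, 1, ..., N−1 be N evenly spaced points. Then the set of minimizers over y ∈ X of the function y ↦ Σ_{i=0}^{N−1} d(y, x_i)² is exactly the set of the N midpoints {(2i+1)/(2N) (mod 1) : i = 0, 1, ..., N−1}, i.e., the points halfway between two neighbouring points x_i. -/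
noncomputable def Fc (N : ℕ) (t : ℝ) : ℝ :=
  ∑ i ∈ Finset.range N, dist ((t : ℝ) : AddCircle (1 : ℝ))
    (((i : ℝ) / (N : ℝ) : ℝ) : AddCircle (1 : ℝ)) ^ 2

lemma distsq_eq (a b : ℝ) (h : |a - b| ≤ 1 / 2) :
    dist ((a : ℝ) : AddCircle (1 : ℝ)) ((b : ℝ) : AddCircle (1 : ℝ)) ^ 2 = (a - b) ^ 2 := by
  rw [dist_eq_norm, ← AddCircle.coe_sub,
    (AddCircle.norm_coe_eq_abs_iff (1 : ℝ) one_ne_zero).mpr (by simpa using h), sq_abs]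

lemma intcoe_zero (n : ℤ) : ((n : ℝ) : AddCircle (1 : ℝ)) = 0 := by
  exact (QuotientAddGroup.eq_zero_iff _).mpr (AddSubgroup.intCast_mem_zmultiples_one n)

noncomputable def cc (N : ℕ) (i : ℕ) : ℝ :=
  (i : ℝ) / N - (if N < 2 * i then 1 else 0)

lemma sum_cc (N : ℕ) (hN : Even N) (hNpos : 0 < N) :
    ∑ i ∈ Finset.range N, cc N i = 1 / 2 := by
  obtain ⟨m, rfl⟩ := hN
  have hm : 0 < m := by omega
  have hNR : ((m + m : ℕ) : ℝ) ≠ 0 := by positivity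
  unfold cc
  rw [Finset.sum_sub_distrib, Finset.sum_ite, Finset.sum_const, Finset.sum_const]
  have hfilter : (Finset.range (m + m)).filter (fun i => m + m < 2 * i) =
      Finset.Ico (m + 1) (m + m) := by
    ext i; simp [Finset.mem_filter, Finset.mem_Ico]; omega
  rw [hfilter]
  have hcard : (Finset.Ico (m + 1) (m + m)).card = m - 1 := by
    rw [Nat.card_Ico]; omega
  have hsum : ∑ i ∈ Finset.range (m + m), (i : ℝ) / (m + m : ℕ) =
      ((m + m : ℕ) - 1) / 2 := by
    rw [← Finset.sum_div]
    have := Finset.sum_range_id_mul_two (m + m)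
    have hcast := congrArg (Nat.cast : ℕ → ℝ) this
    have hle : 1 ≤ m + m := by omega
    push_cast [hle] at hcast
    field_simp
    push_cast
    linarith [hcast]
  rw [hsum, hcard]
  have h1 : (((m : ℕ) - 1 : ℕ) : ℝ) = (m : ℝ) - 1 := by
    have : 1 ≤ m := hm
    push_cast [this]; ring
  push_cast [h1]
  field_simp
  simp only [nsmul_eq_mul, mul_one, mul_zero, add_zero, h1]; ring

lemma Fc_eq_sum_cc (N : ℕ) (hN : Even N) (hNpos : 0 < N) {t : ℝ}
    (ht : t ∈ Set.Icc 0 (1 / (N : ℝ))) :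
    Fc N t = ∑ i ∈ Finset.range N, (t - cc N i) ^ 2 := by
  obtain ⟨ht0, ht1⟩ := ht
  have hN2 : 2 ≤ N := by obtain ⟨m, rfl⟩ := hN; omega
  have hNR : (0 : ℝ) < (N : ℝ) := by exact_mod_cast hNpos
  have hNR2 : (2 : ℝ) ≤ (N : ℝ) := by exact_mod_cast hN2
  have hNhalf : 1 / (N : ℝ) ≤ 1 / 2 := by
    rw [div_le_div_iff₀ hNR (by norm_num)]; linarith
  unfold Fc
  refine Finset.sum_congr rfl fun i hi => ?_
  rw [Finset.mem_range] at hi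
  have hiR2 : (i : ℝ) ≤ (N : ℝ) - 1 := by
    have : (i : ℝ) + 1 ≤ (N : ℝ) := by exact_mod_cast hi
    linarith
  unfold cc
  by_cases h : N < 2 * i
  · -- i > N/2 : use representative i/N - 1
    have h2 : N + 2 ≤ 2 * i := by obtain ⟨m, hm⟩ := hN; omega
    have hiR : ((N : ℝ) + 2) ≤ 2 * (i : ℝ) := by exact_mod_cast h2
    have hub : (i : ℝ) / N ≤ 1 - 1 / N := by
      rw [div_le_iff₀ hNR]
      have : (1 - 1 / (N : ℝ)) * N = N - 1 := by field_simp
      rw [this]; exact hiR2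
    have hlb : 1 / 2 + 1 / (N : ℝ) ≤ (i : ℝ) / N := by
      rw [le_div_iff₀ hNR]
      have : (1 / 2 + 1 / (N : ℝ)) * N = N / 2 + 1 := by field_simp
      rw [this]; linarith
    rw [if_pos h]
    have hrw : (((i : ℝ) / (N : ℝ) : ℝ) : AddCircle (1 : ℝ)) =
        ((((i : ℝ) / (N : ℝ) - 1) : ℝ) : AddCircle (1 : ℝ)) := by
      rw [← AddCircle.coe_add_period (1 : ℝ) ((i : ℝ) / (N : ℝ) - 1)]
      norm_num
    rw [hrw]
    apply distsq_eq
    rw [abs_le]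
    constructor <;> [skip; skip] <;> linarith
  · -- i ≤ N/2
    have h2 : 2 * i ≤ N := by omega
    have hiR : 2 * (i : ℝ) ≤ (N : ℝ) := by exact_mod_cast h2
    have hub : (i : ℝ) / N ≤ 1 / 2 := by
      rw [div_le_iff₀ hNR]; linarith
    have hlb : 0 ≤ (i : ℝ) / N := by positivity
    rw [if_neg h]
    simp only [sub_zero]
    apply distsq_eq
    rw [abs_le]
    constructor <;> linarith

lemma Fc_local (N : ℕ) (hN : Even N) (hNpos : 0 < N) {t : ℝ}
    (ht : t ∈ Set.Icc 0 (1 / (N : ℝ))) :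
    Fc N t = N * (t - 1 / (2 * N)) ^ 2 + Fc N (1 / (2 * N)) := by
  have hNR : (0 : ℝ) < (N : ℝ) := by exact_mod_cast hNpos
  have hs : (1 / (2 * (N : ℝ))) ∈ Set.Icc 0 (1 / (N : ℝ)) := by
    constructor
    · positivity
    · rw [div_le_div_iff₀ (by positivity) hNR]; linarith
  have expand : ∀ x : ℝ, ∑ i ∈ Finset.range N, (x - cc N i) ^ 2 =
      N * x ^ 2 - 2 * x * (∑ i ∈ Finset.range N, cc N i) +
        ∑ i ∈ Finset.range N, cc N i ^ 2 := by
    intro x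
    rw [Finset.sum_congr rfl (fun i _ => by ring :
      ∀ i ∈ Finset.range N, (x - cc N i) ^ 2 = x ^ 2 - 2 * x * cc N i + cc N i ^ 2)]
    rw [Finset.sum_add_distrib, Finset.sum_sub_distrib, Finset.sum_const, ← Finset.mul_sum]
    simp [nsmul_eq_mul]
  rw [Fc_eq_sum_cc N hN hNpos ht, Fc_eq_sum_cc N hN hNpos hs, expand, expand,
    sum_cc N hN hNpos]
  field_simp
  ring

lemma Fc_per (N : ℕ) (hNpos : 0 < N) (t : ℝ) : Fc N (t + 1 / N) = Fc N t := by
  obtain ⟨M, rfl⟩ : ∃ M, N = M + 1 := ⟨N - 1, by omega⟩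
  set N : ℕ := M + 1 with hNdef
  have hterm : ∀ (a : ℝ) (i : ℕ),
      dist ((a : ℝ) : AddCircle (1 : ℝ)) (((i : ℝ) / (N : ℝ) : ℝ) : AddCircle (1 : ℝ)) ^ 2 =
        ‖((a - (i : ℝ) / (N : ℝ) : ℝ) : AddCircle (1 : ℝ))‖ ^ 2 := by
    intro a i
    rw [dist_eq_norm, ← AddCircle.coe_sub]
  unfold Fc
  simp only [hterm]
  have hleft : ∀ i : ℕ, ((t + 1 / (N : ℝ) - (i : ℝ) / N : ℝ) : AddCircle (1 : ℝ)) =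
      ((t - ((i : ℝ) - 1) / N : ℝ) : AddCircle (1 : ℝ)) := by
    intro i
    congr 1
    ring
  simp only [hleft]
  rw [Finset.sum_range_succ' (fun i => ‖((t - ((i : ℝ) - 1) / N : ℝ) : AddCircle (1 : ℝ))‖ ^ 2) M]
  rw [Finset.sum_range_succ (fun i => ‖((t - (i : ℝ) / N : ℝ) : AddCircle (1 : ℝ))‖ ^ 2) M]
  congr 1
  · refine Finset.sum_congr rfl fun i _ => ?_
    norm_num
  · -- first term of shifted sum equals last term of original sum
    have h1 : ((t - ((0 : ℕ) - 1 : ℝ) / N : ℝ) : AddCircle (1 : ℝ)) =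
        ((t - (M : ℝ) / N : ℝ) : AddCircle (1 : ℝ)) := by
      rw [← AddCircle.coe_add_period (1 : ℝ) (t - (M : ℝ) / N)]
      congr 1
      have hNR : ((N : ℕ) : ℝ) ≠ 0 := by positivity
      have hM : ((M : ℝ)) = (N : ℝ) - 1 := by
        rw [hNdef]; push_cast; ring
      rw [hM]
      field_simp
      ring
    rw [h1]

lemma Fc_per_nat (N : ℕ) (hNpos : 0 < N) (j : ℕ) (t : ℝ) :
    Fc N (t + j / N) = Fc N t := by
  induction j with
  | zero => simp
  | succ j ih =>
    have : t + ((j + 1 : ℕ) : ℝ) / N = (t + j / N) + 1 / N := by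
      push_cast; ring
    rw [this, Fc_per N hNpos, ih]

lemma cover (N : ℕ) (hNpos : 0 < N) (y : AddCircle (1 : ℝ)) :
    ∃ t : ℝ, ∃ j : ℕ, t ∈ Set.Icc 0 (1 / (N : ℝ)) ∧ j < N ∧
      y = ((t + j / N : ℝ) : AddCircle (1 : ℝ)) := by
  have hNR : (0 : ℝ) < (N : ℝ) := by exact_mod_cast hNpos
  obtain ⟨x, rfl⟩ := QuotientAddGroup.mk_surjective y
  set u : ℝ := Int.fract x with hu
  have hu0 : 0 ≤ u := Int.fract_nonneg x
  have hu1 : u < 1 := Int.fract_lt_one x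
  have hxu : ((x : ℝ) : AddCircle (1 : ℝ)) = ((u : ℝ) : AddCircle (1 : ℝ)) := by
    have : x = u + (⌊x⌋ : ℝ) := by rw [hu]; unfold Int.fract; ring
    rw [this, AddCircle.coe_add, intcoe_zero, add_zero]
  have hfl0 : 0 ≤ ⌊u * N⌋ := Int.floor_nonneg.mpr (by positivity)
  set j : ℕ := ⌊u * N⌋.toNat with hj
  have hjR : (j : ℝ) = (⌊u * N⌋ : ℝ) := by
    rw [hj]; exact_mod_cast Int.toNat_of_nonneg hfl0
  have hle : (j : ℝ) ≤ u * N := by rw [hjR]; exact Int.floor_le _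
  have hlt : u * N < (j : ℝ) + 1 := by rw [hjR]; exact Int.lt_floor_add_one _
  have hjN : j < N := by
    have : u * N < N := by nlinarith
    have h2 : (j : ℝ) < (N : ℝ) := by linarith
    exact_mod_cast h2
  refine ⟨u - j / N, j, ⟨?_, ?_⟩, hjN, ?_⟩
  · rw [sub_nonneg, div_le_iff₀ hNR]; linarith
  · rw [sub_le_iff_le_add]
    rw [← add_div, le_div_iff₀ hNR]; linarith
  · rw [hxu]
    congr 1
    ring

/-- On the circle `ℝ/ℤ` with the quotient metric, for an even number `N > 0` of evenly
spaced points `x_i = i/N`, the set of minimizers of `y ↦ Σᵢ d(y, x_i)²` is exactly the set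
of the `N` midpoints `(2i+1)/(2N)` between neighbouring points. -/
theorem circle_barycenters_even
    (N : ℕ) (hN : Even N) (hNpos : 0 < N) :
    {y : AddCircle (1 : ℝ) | ∀ z : AddCircle (1 : ℝ),
        ∑ i ∈ Finset.range N, dist y (((i : ℝ) / (N : ℝ) : ℝ) : AddCircle (1 : ℝ)) ^ 2 ≤
        ∑ i ∈ Finset.range N, dist z (((i : ℝ) / (N : ℝ) : ℝ) : AddCircle (1 : ℝ)) ^ 2} =
      {y : AddCircle (1 : ℝ) | ∃ i < N,
        y = (((2 * (i : ℝ) + 1) / (2 * (N : ℝ)) : ℝ) : AddCircle (1 : ℝ))} := by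
  have hNR : (0 : ℝ) < (N : ℝ) := by exact_mod_cast hNpos
  ext y
  simp only [Set.mem_setOf_eq]
  constructor
  · intro hy
    obtain ⟨t, j, ht, hjN, rfl⟩ := cover N hNpos y
    have h1 : Fc N (t + j / N) ≤ Fc N (1 / (2 * N)) := hy _
    rw [Fc_per_nat N hNpos, Fc_local N hN hNpos ht] at h1
    have h2 : (N : ℝ) * (t - 1 / (2 * N)) ^ 2 ≤ 0 := by linarith
    have h4 : (t - 1 / (2 * N)) ^ 2 ≤ 0 := by nlinarith
    have h5 : (t - 1 / (2 * N)) ^ 2 = 0 := le_antisymm h4 (sq_nonneg _)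
    have h3 : t = 1 / (2 * N) := by
      have := pow_eq_zero_iff (n := 2) (by norm_num) |>.mp h5
      linarith [sub_eq_zero.mp this]
    refine ⟨j, hjN, ?_⟩
    rw [h3]
    congr 1
    field_simp
    ring
  · rintro ⟨i, hiN, rfl⟩ z
    obtain ⟨t, j, ht, hjN, rfl⟩ := cover N hNpos z
    have hrw : (2 * (i : ℝ) + 1) / (2 * N) = 1 / (2 * N) + (i : ℕ) / N := by
      field_simp; ring
    show Fc N ((2 * (i : ℝ) + 1) / (2 * N)) ≤ Fc N (t + j / N)
    rw [hrw, Fc_per_nat N hNpos i (1 / (2 * N)), Fc_per_nat N hNpos j t,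
      Fc_local N hN hNpos ht]
    nlinarith [sq_nonneg (t - 1 / (2 * N))]
end
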